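/- arXiv:2501.07509 — 4 statements merged into one kernel-verified Lean document; each statement's English description precedes it below -/
import Mathlib

section
/- Let (Ω, 𝓕, ℙ) be a probability space and let f : ℝ → ℝ be twice continuously differentiable such that for some constants C ≥ 0 and p ≥ 1 one has |f(x)| ≤ C(1+|x|^p), |f'(x)| ≤ C(1+|x|^p) and |f''(x)| ≤ C(1+|x|^p) for all x ∈ ℝ. Fix r ≥ 1 and q ≥ max(2pr, 4r). Let X and H be real random variables on Ω with E[|X|^q] < ∞ and E[|H|^q] < ∞, let (H_n) be a sequence of random variables with E[|H_n|^q] < ∞ and E[|H_n - H|^q]^{1/q} → 0, and let (t_n) be a sequence of positive real numbers with t_n → 0. Then E[ | (f(X + t_n H_n) - f(X))/t_n - f'(X)·H |^r ]^{1/r} → 0 as n → ∞. In particular, the Nemytskii map X ↦ f∘X from L^q(Ω) to L^r(Ω) is Hadamard-differentiable at X, with Hadamard derivative in the direction H equal to f'(X)·H. -/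
open MeasureTheory Filter
open scoped ENNReal

-- points of a segment in ℝ between a and b are within |b - a| of a
lemma seg_abs_le {a b y : ℝ} (hy : y ∈ segment ℝ a b) : |y - a| ≤ |b - a| := by
  rw [segment_eq_uIcc] at hy
  rw [Set.mem_uIcc] at hy
  rcases hy with ⟨h1, h2⟩ | ⟨h1, h2⟩ <;> rw [abs_le] <;> constructor <;>
    cases abs_cases (b - a) <;> linarith

/-- Pointwise second-order Taylor bound. -/
lemma taylor_pointwise (f : ℝ → ℝ) (hf : ContDiff ℝ 2 f)
    (C p : ℝ) (hC : 0 ≤ C) (hp : 1 ≤ p)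
    (hf2 : ∀ x : ℝ, |deriv (deriv f) x| ≤ C * (1 + |x| ^ p))
    (a h s : ℝ) (hs : 0 < s) :
    |(f (a + s * h) - f a) / s - deriv f a * h| ≤
      C * (1 + (|a| + s * |h|) ^ p) * s * h ^ 2 := by
  have h2 : (2 : ℕ∞) = 1 + 1 := by norm_num
  have hfd : Differentiable ℝ f := hf.differentiable (by norm_num)
  have hg1 : ContDiff ℝ 1 (deriv f) := by
    have hf' : ContDiff ℝ (1 + 1) f := by
      rw [one_add_one_eq_two]; exact_mod_cast hf
    exact (contDiff_succ_iff_deriv.mp hf').2.2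
  have hgd : Differentiable ℝ (deriv f) := hg1.differentiable one_ne_zero
  set g := deriv f with hg
  set S := segment ℝ a (a + s * h) with hS
  have hconv : Convex ℝ S := convex_segment _ _
  have haS : a ∈ S := left_mem_segment ℝ _ _
  have hbS : a + s * h ∈ S := right_mem_segment ℝ _ _
  set M : ℝ := C * (1 + (|a| + s * |h|) ^ p) with hM
  have hM0 : 0 ≤ M := by positivity
  -- bound on the second derivative on S
  have hbound2 : ∀ y ∈ S, |deriv g y| ≤ M := by
    intro y hy
    refine (hf2 y).trans ?_
    have h1 : |y| ≤ |a| + s * |h| := by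
      have := seg_abs_le hy
      have h3 : |a + s * h - a| = s * |h| := by
        rw [add_sub_cancel_left, abs_mul, abs_of_pos hs]
      have := abs_sub_abs_le_abs_sub y a
      cases abs_cases (y - a) <;> cases abs_cases y <;> cases abs_cases a <;> nlinarith
    have h2' : |y| ^ p ≤ (|a| + s * |h|) ^ p :=
      Real.rpow_le_rpow (abs_nonneg _) h1 (by linarith)
    have := mul_le_mul_of_nonneg_left (by linarith : 1 + |y| ^ p ≤ 1 + (|a| + s * |h|) ^ p) hC
    linarith
  -- g is M * |sh|-close to g a on S (Lipschitz bound for g)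
  have hglip : ∀ y ∈ S, |g y - g a| ≤ M * (s * |h|) := by
    intro y hy
    have := Convex.norm_image_sub_le_of_norm_hasDerivWithin_le
      (f := g) (f' := deriv g) (s := S)
      (fun z hz => ((hgd z).hasDerivAt).hasDerivWithinAt)
      (fun z hz => hbound2 z hz) hconv haS hy
    rw [Real.norm_eq_abs, Real.norm_eq_abs] at this
    refine this.trans ?_
    have h3 : |y - a| ≤ s * |h| := by
      have := seg_abs_le hy
      have h4 : |a + s * h - a| = s * |h| := by
        rw [add_sub_cancel_left, abs_mul, abs_of_pos hs]
      linarith [this, h4.le]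
    gcongr
  -- apply MVT to u y = f y - g a * y
  set u : ℝ → ℝ := fun y => f y - g a * y with hu
  have hukey : |u (a + s * h) - u a| ≤ (M * (s * |h|)) * |a + s * h - a| := by
    have := Convex.norm_image_sub_le_of_norm_hasDerivWithin_le
      (f := u) (f' := fun y => g y - g a) (s := S)
      (fun z hz => (((hfd z).hasDerivAt).sub
        ((hasDerivAt_id z).const_mul (g a))).hasDerivWithinAt.congr_deriv (by ring))
      (fun z hz => by rw [Real.norm_eq_abs]; exact hglip z hz) hconv haS hbS
    rw [Real.norm_eq_abs, Real.norm_eq_abs] at this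
    exact this
  have habs : |a + s * h - a| = s * |h| := by
    rw [add_sub_cancel_left, abs_mul, abs_of_pos hs]
  rw [habs] at hukey
  have hexp : u (a + s * h) - u a = f (a + s * h) - f a - g a * (s * h) := by
    simp only [hu]; ring
  rw [hexp] at hukey
  have hmain : |(f (a + s * h) - f a) / s - g a * h| ≤ M * s * h ^ 2 := by
    have hmulform : |(f (a + s * h) - f a) / s - g a * h| * s =
        |f (a + s * h) - f a - g a * (s * h)| := by
      have heq : ((f (a + s * h) - f a) / s - g a * h) * s =
          f (a + s * h) - f a - g a * (s * h) := by
        field_simp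
      rw [← heq, abs_mul, abs_of_pos hs]
    have h5 : M * (s * |h|) * (s * |h|) = M * s * h ^ 2 * s := by
      have h6 : |h| * |h| = h ^ 2 := by rw [← abs_mul, ← sq, abs_sq]
      linear_combination (M * s * s) * h6
    refine le_of_mul_le_mul_right ?_ hs
    rw [hmulform]
    calc |f (a + s * h) - f a - g a * (s * h)| ≤ M * (s * |h|) * (s * |h|) := hukey
      _ = M * s * h ^ 2 * s := h5
  calc |(f (a + s * h) - f a) / s - g a * h| ≤ M * s * h ^ 2 := hmain
    _ = C * (1 + (|a| + s * |h|) ^ p) * s * h ^ 2 := by rw [hM]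

lemma add_rpow_le {x y p : ℝ} (hx : 0 ≤ x) (hy : 0 ≤ y) (hp : 0 ≤ p) :
    (x + y) ^ p ≤ 2 ^ p * (x ^ p + y ^ p) := by
  have h1 : x + y ≤ 2 * max x y := by
    rcases le_total x y with h | h
    · simp [max_eq_right h]; linarith
    · simp [max_eq_left h]; linarith
  have h2 : (x + y) ^ p ≤ (2 * max x y) ^ p :=
    Real.rpow_le_rpow (by linarith) h1 hp
  have h3 : (2 * max x y) ^ p = 2 ^ p * (max x y) ^ p :=
    Real.mul_rpow (by norm_num) (le_max_of_le_left hx)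
  have h4 : (max x y) ^ p ≤ x ^ p + y ^ p := by
    rcases le_total x y with h | h
    · rw [max_eq_right h]
      have : 0 ≤ x ^ p := Real.rpow_nonneg hx p
      linarith
    · rw [max_eq_left h]
      have : 0 ≤ y ^ p := Real.rpow_nonneg hy p
      linarith
  calc (x + y) ^ p ≤ 2 ^ p * (max x y) ^ p := by rw [← h3]; exact h2
    _ ≤ 2 ^ p * (x ^ p + y ^ p) := by
        have : (0:ℝ) ≤ 2 ^ p := Real.rpow_nonneg (by norm_num) p
        nlinarith

/-- A polynomial-growth composition is in `L^s` when `Y ∈ L^q` and `s * p ≤ q`. -/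
lemma memLp_poly {Ω : Type*} [MeasurableSpace Ω] (ℙ : Measure Ω) [IsProbabilityMeasure ℙ]
    {Y : Ω → ℝ} {q s p C : ℝ} (hC : 0 ≤ C) (hp : 0 < p) (hs : 0 < s) (hq : 0 < q)
    (hsp : s * p ≤ q) (hY : MemLp Y (ENNReal.ofReal q) ℙ)
    (φ : ℝ → ℝ) (hφc : Continuous φ) (hφ : ∀ x, |φ x| ≤ C * (1 + |x| ^ p)) :
    MemLp (fun ω => φ (Y ω)) (ENNReal.ofReal s) ℙ := by
  have hpow : MemLp (fun ω => ‖Y ω‖ ^ (ENNReal.ofReal p).toReal)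
      (ENNReal.ofReal q / ENNReal.ofReal p) ℙ := hY.norm_rpow_div (ENNReal.ofReal p)
  have hple : ENNReal.ofReal s ≤ ENNReal.ofReal q / ENNReal.ofReal p := by
    rw [ENNReal.le_div_iff_mul_le (Or.inl (by simp [hp])) (Or.inl ENNReal.ofReal_ne_top)]
    rw [← ENNReal.ofReal_mul hs.le]
    exact ENNReal.ofReal_le_ofReal hsp
  have hpow' : MemLp (fun ω => |Y ω| ^ p) (ENNReal.ofReal s) ℙ := by
    have := hpow.mono_exponent hple
    simpa [ENNReal.toReal_ofReal hp.le, Real.norm_eq_abs] using this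
  have hbase : MemLp (fun ω => C * (1 + |Y ω| ^ p)) (ENNReal.ofReal s) ℙ :=
    ((memLp_const (1:ℝ)).add hpow').const_mul C
  refine MemLp.of_le hbase (hφc.comp_aestronglyMeasurable hY.1) ?_
  filter_upwards with ω
  rw [Real.norm_eq_abs, Real.norm_eq_abs]
  refine (hφ _).trans (le_abs_self _)

set_option maxHeartbeats 1000000 in
/-- Hadamard differentiability of the Nemytskii map `X ↦ f ∘ X` from `L^q(Ω)` to `L^r(Ω)`:
along any sequence of directions `Hₙ → H` in `L^q` and positive scalars `tₙ → 0`,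
the difference quotients converge in `L^r` to `f'(X)·H`. -/
theorem nemytskii_hadamard_differentiable
    {Ω : Type*} [MeasurableSpace Ω] (ℙ : Measure Ω) [IsProbabilityMeasure ℙ]
    (f : ℝ → ℝ) (hf : ContDiff ℝ 2 f)
    (C p : ℝ) (hC : 0 ≤ C) (hp : 1 ≤ p)
    (hf0 : ∀ x : ℝ, |f x| ≤ C * (1 + |x| ^ p))
    (hf1 : ∀ x : ℝ, |deriv f x| ≤ C * (1 + |x| ^ p))
    (hf2 : ∀ x : ℝ, |deriv (deriv f) x| ≤ C * (1 + |x| ^ p))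
    (r q : ℝ) (hr : 1 ≤ r) (hq : max (2 * p * r) (4 * r) ≤ q)
    (X H : Ω → ℝ) (Hseq : ℕ → Ω → ℝ)
    (hX : Measurable X) (hH : Measurable H) (hHseq : ∀ n, Measurable (Hseq n))
    (hXq : Integrable (fun ω => |X ω| ^ q) ℙ)
    (hHq : Integrable (fun ω => |H ω| ^ q) ℙ)
    (hHseqq : ∀ n, Integrable (fun ω => |Hseq n ω| ^ q) ℙ)
    (hconv : Tendsto (fun n => (∫ ω, |Hseq n ω - H ω| ^ q ∂ℙ) ^ (1 / q)) atTop (nhds 0))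
    (t : ℕ → ℝ) (htpos : ∀ n, 0 < t n) (ht : Tendsto t atTop (nhds 0)) :
    Tendsto
      (fun n =>
        (∫ ω, |(f (X ω + t n * Hseq n ω) - f (X ω)) / t n - deriv f (X ω) * H ω| ^ r ∂ℙ)
          ^ (1 / r))
      atTop (nhds 0) := by
  -- scalar facts
  have hr0 : (0:ℝ) < r := lt_of_lt_of_le one_pos hr
  have hp0 : (0:ℝ) < p := lt_of_lt_of_le one_pos hp
  have h4r : 4 * r ≤ q := le_trans (le_max_right _ _) hq
  have h2pr : 2 * p * r ≤ q := le_trans (le_max_left _ _) hq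
  have hq0 : (0:ℝ) < q := by linarith
  have h2r1 : (1:ℝ) ≤ 2 * r := by linarith
  set re := ENNReal.ofReal r with hre
  set r2 := ENNReal.ofReal (2 * r) with hr2
  set qe := ENNReal.ofReal q with hqe
  have hre0 : re ≠ 0 := by simp [hre, hr0]
  have hret : re ≠ ⊤ := ENNReal.ofReal_ne_top
  have hr20 : r2 ≠ 0 := by simp [hr2]; linarith
  have hr2t : r2 ≠ ⊤ := ENNReal.ofReal_ne_top
  have hqe0 : qe ≠ 0 := by simp [hqe]; linarith
  have hqet : qe ≠ ⊤ := ENNReal.ofReal_ne_top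
  have h1re : (1:ℝ≥0∞) ≤ re := by rw [hre]; exact ENNReal.one_le_ofReal.mpr hr
  have h1r2 : (1:ℝ≥0∞) ≤ r2 := by rw [hr2]; exact ENNReal.one_le_ofReal.mpr h2r1
  have h1qe : (1:ℝ≥0∞) ≤ qe := by rw [hqe]; exact ENNReal.one_le_ofReal.mpr (by linarith)
  have hr2qe : r2 ≤ qe := by rw [hr2, hqe]; exact ENNReal.ofReal_le_ofReal (by linarith)
  -- Hölder exponent relation : 1/re = 1/r2 + 1/r2
  have hr2eq : r2 = 2 * re := by
    rw [hr2, hre, ENNReal.ofReal_mul (by norm_num : (0:ℝ) ≤ 2)]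
    norm_num
  have hhold : 1 / re = 1 / r2 + 1 / r2 := by
    have h1 : r2⁻¹ = 2⁻¹ * re⁻¹ := by
      rw [hr2eq, ENNReal.mul_inv (Or.inl two_ne_zero) (Or.inl ENNReal.ofNat_ne_top)]
    simp only [one_div, h1]
    rw [← two_mul, ← mul_assoc, ENNReal.mul_inv_cancel two_ne_zero ENNReal.ofNat_ne_top, one_mul]
  -- Memℒp conversions of the integrability hypotheses
  have hmem : ∀ (Y : Ω → ℝ), Measurable Y → Integrable (fun ω => |Y ω| ^ q) ℙ →
      MemLp Y qe ℙ := by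
    intro Y hY hYq
    rw [← memLp_one_iff_integrable] at hYq
    have := (memLp_norm_rpow_iff (q := qe) (p := qe) (μ := ℙ)
      hY.aestronglyMeasurable hqe0 hqet).mp
    rw [ENNReal.div_self hqe0 hqet] at this
    apply this
    simpa [hqe, ENNReal.toReal_ofReal hq0.le, Real.norm_eq_abs] using hYq
  have hXm : MemLp X qe ℙ := hmem X hX hXq
  have hHm : MemLp H qe ℙ := hmem H hH hHq
  have hHsm : ∀ n, MemLp (Hseq n) qe ℙ := fun n => hmem _ (hHseq n) (hHseqq n)
  have hdiffm : ∀ n, MemLp (fun ω => Hseq n ω - H ω) qe ℙ := fun n => (hHsm n).sub hHm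
  -- convergence of H_n to H in L^q, eLpNorm form
  have hconv' : Tendsto (fun n => eLpNorm (fun ω => Hseq n ω - H ω) qe ℙ) atTop (nhds 0) := by
    have heq : ∀ n, eLpNorm (fun ω => Hseq n ω - H ω) qe ℙ =
        ENNReal.ofReal ((∫ ω, |Hseq n ω - H ω| ^ q ∂ℙ) ^ (1 / q)) := by
      intro n
      rw [(hdiffm n).eLpNorm_eq_integral_rpow_norm hqe0 hqet]
      congr 1
      simp [hqe, ENNReal.toReal_ofReal hq0.le, Real.norm_eq_abs, one_div]
    have h0 := ENNReal.tendsto_ofReal hconv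
    rw [ENNReal.ofReal_zero] at h0
    exact Tendsto.congr (fun n => (heq n).symm) h0
  -- Hölder inequality wrapper
  have holder : ∀ (φ ψ : Ω → ℝ), AEStronglyMeasurable φ ℙ → AEStronglyMeasurable ψ ℙ →
      eLpNorm (fun ω => φ ω * ψ ω) re ℙ ≤ eLpNorm φ r2 ℙ * eLpNorm ψ r2 ℙ := by
    intro φ ψ hφ hψ
    haveI : ENNReal.HolderTriple r2 r2 re := ⟨by simp only [one_div] at hhold; exact hhold.symm⟩
    have h := eLpNorm_smul_le_mul_eLpNorm (E := ℝ) (𝕜 := ℝ) (μ := ℙ) (f := ψ) (φ := φ)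
      (p := r2) (q := r2) (r := re) hψ hφ
    have heq : φ • ψ = fun ω => φ ω * ψ ω := rfl
    rwa [heq] at h
  -- rpow of eLpNorm wrapper
  have hrpow : ∀ (Y : Ω → ℝ) (s : ℝ), 0 < s →
      eLpNorm (fun ω => |Y ω| ^ s) r2 ℙ = eLpNorm Y (r2 * ENNReal.ofReal s) ℙ ^ s := by
    intro Y s hs
    have := eLpNorm_norm_rpow (p := r2) (μ := ℙ) Y hs
    simpa [Real.norm_eq_abs] using this
  -- continuity and differentiability facts for f
  have hfc : Continuous f := hf.continuous
  have hgc : Continuous (deriv f) := by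
    have hf' : ContDiff ℝ (1 + 1) f := by
      rw [one_add_one_eq_two]; exact_mod_cast hf
    exact ((contDiff_succ_iff_deriv.mp hf').2.2).continuous
  -- abs-rpow is continuous
  have habsc : Continuous (fun x : ℝ => |x| ^ p) :=
    (Real.continuous_rpow_const hp0.le).comp continuous_abs
  -- Memℒp facts for the various random variables
  have hgXm : MemLp (fun ω => deriv f (X ω)) r2 ℙ :=
    memLp_poly ℙ hC hp0 (by linarith : (0:ℝ) < 2 * r) hq0 (by nlinarith) hXm (deriv f) hgc hf1
  have hfXm : MemLp (fun ω => f (X ω)) re ℙ :=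
    memLp_poly ℙ hC hp0 hr0 hq0 (by nlinarith) hXm f hfc hf0
  have hYm : ∀ n, MemLp (fun ω => X ω + t n * Hseq n ω) qe ℙ := fun n =>
    hXm.add ((hHsm n).const_mul (t n))
  have hfYm : ∀ n, MemLp (fun ω => f (X ω + t n * Hseq n ω)) re ℙ := fun n =>
    memLp_poly ℙ hC hp0 hr0 hq0 (by nlinarith) (hYm n) f hfc hf0
  have hquot : ∀ n, MemLp
      (fun ω => (f (X ω + t n * Hseq n ω) - f (X ω)) / t n) re ℙ := by
    intro n
    have h := ((hfYm n).sub hfXm).const_mul (t n)⁻¹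
    have heq : (fun ω => (t n)⁻¹ * ((fun ω => f (X ω + t n * Hseq n ω)) ω - (fun ω => f (X ω)) ω))
        = fun ω => (f (X ω + t n * Hseq n ω) - f (X ω)) / t n := by
      funext ω; rw [div_eq_inv_mul]
    rw [← heq]
    exact h
  -- product of two L^{2r} variables is L^r
  have memMul : ∀ (φ ψ : Ω → ℝ), MemLp φ r2 ℙ → MemLp ψ r2 ℙ →
      MemLp (fun ω => φ ω * ψ ω) re ℙ := by
    intro φ ψ hφ hψ
    haveI : ENNReal.HolderTriple r2 r2 re := ⟨by simp only [one_div] at hhold; exact hhold.symm⟩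
    have h := MemLp.smul (φ := φ) (f := ψ) (p := r2) (q := r2) (r := re) hψ hφ
    have heq : φ • ψ = fun ω => φ ω * ψ ω := rfl
    rwa [heq] at h
  have hHr2 : MemLp H r2 ℙ := hHm.mono_exponent hr2qe
  have hHsr2 : ∀ n, MemLp (Hseq n) r2 ℙ := fun n => (hHsm n).mono_exponent hr2qe
  have hgXH : MemLp (fun ω => deriv f (X ω) * H ω) re ℙ := memMul _ _ hgXm hHr2
  have hgXHn : ∀ n, MemLp (fun ω => deriv f (X ω) * Hseq n ω) re ℙ := fun n =>
    memMul _ _ hgXm (hHsr2 n)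
  -- the difference quotient error terms
  have hDm : ∀ n, MemLp
      (fun ω => (f (X ω + t n * Hseq n ω) - f (X ω)) / t n - deriv f (X ω) * H ω) re ℙ :=
    fun n => (hquot n).sub hgXH
  have hD1m : ∀ n, MemLp
      (fun ω => (f (X ω + t n * Hseq n ω) - f (X ω)) / t n - deriv f (X ω) * Hseq n ω) re ℙ :=
    fun n => (hquot n).sub (hgXHn n)
  have hD2m : ∀ n, MemLp (fun ω => deriv f (X ω) * (Hseq n ω - H ω)) re ℙ := fun n =>
    memMul _ _ hgXm ((hdiffm n).mono_exponent hr2qe)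
  -- second term estimate
  set G := eLpNorm (fun ω => deriv f (X ω)) r2 ℙ with hGdef
  have hGt : G ≠ ⊤ := hgXm.2.ne
  have hT2 : ∀ n, eLpNorm (fun ω => deriv f (X ω) * (Hseq n ω - H ω)) re ℙ ≤
      G * eLpNorm (fun ω => Hseq n ω - H ω) qe ℙ := by
    intro n
    refine (holder _ _ hgXm.1 (hdiffm n).1).trans ?_
    exact mul_le_mul_right
      (eLpNorm_le_eLpNorm_of_exponent_le hr2qe (hdiffm n).1) G
  have hT2lim : Tendsto (fun n => G * eLpNorm (fun ω => Hseq n ω - H ω) qe ℙ)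
      atTop (nhds 0) := by
    have := ENNReal.Tendsto.const_mul hconv' (Or.inr hGt)
    simpa using this
  -- constants
  set EX := eLpNorm X qe ℙ with hEXdef
  have hEXt : EX ≠ ⊤ := hXm.2.ne
  set M : ℝ≥0∞ := eLpNorm H qe ℙ + 1 with hMdef
  have hMt : M ≠ ⊤ := by
    rw [hMdef]
    exact ENNReal.add_ne_top.mpr ⟨hHm.2.ne, ENNReal.one_ne_top⟩
  -- eLpNorm of |Y|^s at exponent 2r, via the L^q norm of Y
  have hexpmono : ∀ (Y : Ω → ℝ) (s : ℝ), Measurable Y → 0 < s → 2 * r * s ≤ q →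
      eLpNorm (fun ω => |Y ω| ^ s) r2 ℙ ≤ eLpNorm Y qe ℙ ^ s := by
    intro Y s hYmeas hs hsq
    rw [hrpow Y s hs]
    refine ENNReal.rpow_le_rpow ?_ hs.le
    refine eLpNorm_le_eLpNorm_of_exponent_le ?_ hYmeas.aestronglyMeasurable
    rw [hr2, hqe, ← ENNReal.ofReal_mul (by linarith)]
    exact ENNReal.ofReal_le_ofReal hsq
  have hone : eLpNorm (fun _ : Ω => (1:ℝ)) r2 ℙ = 1 := by
    rw [eLpNorm_const (1:ℝ) hr20 (by
      intro h0
      have h1 := measure_univ (μ := ℙ)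
      rw [h0] at h1
      simp at h1)]
    simp
  -- eventually the L^q norm of Hseq n is at most M
  have hMev : ∀ᶠ n in atTop, eLpNorm (Hseq n) qe ℙ ≤ M := by
    have h1 : ∀ᶠ n in atTop, eLpNorm (fun ω => Hseq n ω - H ω) qe ℙ < 1 :=
      hconv'.eventually_lt_const (by norm_num)
    filter_upwards [h1] with n hn
    have heq : (Hseq n) = (fun ω => H ω) + (fun ω => Hseq n ω - H ω) := by funext ω; simp
    calc eLpNorm (Hseq n) qe ℙ
        = eLpNorm ((fun ω => H ω) + fun ω => Hseq n ω - H ω) qe ℙ := by rw [← heq]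
      _ ≤ eLpNorm H qe ℙ + eLpNorm (fun ω => Hseq n ω - H ω) qe ℙ :=
          eLpNorm_add_le hH.aestronglyMeasurable (hdiffm n).1 h1qe
      _ ≤ M := by rw [hMdef]; exact add_le_add_right hn.le _
  -- bound for the "A" factor
  have hA : ∀ n, eLpNorm (fun ω => 1 + |X ω| ^ p + |Hseq n ω| ^ p) r2 ℙ ≤
      1 + EX ^ p + (eLpNorm (Hseq n) qe ℙ) ^ p := by
    intro n
    have asm1 : AEStronglyMeasurable (fun _ : Ω => (1:ℝ)) ℙ := aestronglyMeasurable_const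
    have asmX : AEStronglyMeasurable (fun ω => |X ω| ^ p) ℙ :=
      habsc.comp_aestronglyMeasurable hX.aestronglyMeasurable
    have asmH : AEStronglyMeasurable (fun ω => |Hseq n ω| ^ p) ℙ :=
      habsc.comp_aestronglyMeasurable (hHseq n).aestronglyMeasurable
    have e1 : (fun ω => 1 + |X ω| ^ p + |Hseq n ω| ^ p) =
        ((fun _ : Ω => (1:ℝ)) + fun ω => |X ω| ^ p) + fun ω => |Hseq n ω| ^ p := rfl
    calc eLpNorm (fun ω => 1 + |X ω| ^ p + |Hseq n ω| ^ p) r2 ℙ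
        = eLpNorm (((fun _ : Ω => (1:ℝ)) + fun ω => |X ω| ^ p) + fun ω => |Hseq n ω| ^ p) r2 ℙ := by
          rw [← e1]
      _ ≤ eLpNorm ((fun _ : Ω => (1:ℝ)) + fun ω => |X ω| ^ p) r2 ℙ +
            eLpNorm (fun ω => |Hseq n ω| ^ p) r2 ℙ :=
          eLpNorm_add_le (asm1.add asmX) asmH h1r2
      _ ≤ (eLpNorm (fun _ : Ω => (1:ℝ)) r2 ℙ + eLpNorm (fun ω => |X ω| ^ p) r2 ℙ) +
            eLpNorm (fun ω => |Hseq n ω| ^ p) r2 ℙ :=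
          add_le_add_left (eLpNorm_add_le asm1 asmX h1r2) _
      _ ≤ 1 + EX ^ p + (eLpNorm (Hseq n) qe ℙ) ^ p := by
          rw [hone]
          exact add_le_add (add_le_add_right (hexpmono X p hX hp0 (by nlinarith)) 1)
            (hexpmono (Hseq n) p (hHseq n) hp0 (by nlinarith))
  -- pointwise Taylor estimate
  have hsq : ∀ x : ℝ, x ^ 2 = |x| ^ (2:ℝ) := by
    intro x
    rw [show (2:ℝ) = ((2:ℕ):ℝ) by norm_num, Real.rpow_natCast, sq_abs]
  have hpt : ∀ n, t n ≤ 1 → ∀ ω,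
      |(f (X ω + t n * Hseq n ω) - f (X ω)) / t n - deriv f (X ω) * Hseq n ω| ≤
        (t n * (C * 2 ^ p)) *
          ((1 + |X ω| ^ p + |Hseq n ω| ^ p) * |Hseq n ω| ^ (2:ℝ)) := by
    intro n htn ω
    have h0 := taylor_pointwise f hf C p hC hp hf2 (X ω) (Hseq n ω) (t n) (htpos n)
    set a := X ω with ha
    set h := Hseq n ω with hh
    set s := t n with hs
    have hs0 : (0:ℝ) < s := htpos n
    have hA1 : (|a| + s * |h|) ^ p ≤ (|a| + |h|) ^ p := by
      apply Real.rpow_le_rpow (by positivity) ?_ hp0.le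
      nlinarith [abs_nonneg h, hs0]
    have hA2 : (|a| + |h|) ^ p ≤ 2 ^ p * (|a| ^ p + |h| ^ p) :=
      add_rpow_le (abs_nonneg a) (abs_nonneg h) hp0.le
    have h2p1 : (1:ℝ) ≤ 2 ^ p := by
      calc (1:ℝ) = 2 ^ (0:ℝ) := by norm_num
        _ ≤ 2 ^ p := Real.rpow_le_rpow_of_exponent_le (by norm_num) hp0.le
    have hchain : 1 + (|a| + s * |h|) ^ p ≤ 2 ^ p * (1 + |a| ^ p + |h| ^ p) := by
      nlinarith [hA1, hA2, h2p1, Real.rpow_nonneg (abs_nonneg a) p,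
        Real.rpow_nonneg (abs_nonneg h) p]
    have hcsh : (0:ℝ) ≤ C * s * h ^ 2 := mul_nonneg (mul_nonneg hC hs0.le) (sq_nonneg h)
    calc |(f (a + s * h) - f a) / s - deriv f a * h|
        ≤ C * (1 + (|a| + s * |h|) ^ p) * s * h ^ 2 := h0
      _ = (1 + (|a| + s * |h|) ^ p) * (C * s * h ^ 2) := by ring
      _ ≤ (2 ^ p * (1 + |a| ^ p + |h| ^ p)) * (C * s * h ^ 2) :=
          mul_le_mul_of_nonneg_right hchain hcsh
      _ = (s * (C * 2 ^ p)) * ((1 + |a| ^ p + |h| ^ p) * h ^ 2) := by ring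
      _ = (s * (C * 2 ^ p)) * ((1 + |a| ^ p + |h| ^ p) * |h| ^ (2:ℝ)) := by rw [hsq h]
  -- the uniform bound for the first error term
  set B : ℝ≥0∞ := ENNReal.ofReal (C * 2 ^ p) * ((1 + EX ^ p + M ^ p) * M ^ (2:ℝ)) with hBdef
  have hBt : B ≠ ⊤ := by
    rw [hBdef]
    refine ENNReal.mul_ne_top ENNReal.ofReal_ne_top (ENNReal.mul_ne_top ?_ ?_)
    · exact ENNReal.add_ne_top.mpr ⟨ENNReal.add_ne_top.mpr ⟨ENNReal.one_ne_top,
        ENNReal.rpow_ne_top_of_nonneg hp0.le hEXt⟩, ENNReal.rpow_ne_top_of_nonneg hp0.le hMt⟩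
    · exact ENNReal.rpow_ne_top_of_nonneg (by norm_num) hMt
  have hD1est : ∀ n, t n ≤ 1 → eLpNorm (Hseq n) qe ℙ ≤ M →
      eLpNorm (fun ω => (f (X ω + t n * Hseq n ω) - f (X ω)) / t n
        - deriv f (X ω) * Hseq n ω) re ℙ ≤ ENNReal.ofReal (t n) * B := by
    intro n htn hMn
    have asmA : AEStronglyMeasurable (fun ω => 1 + |X ω| ^ p + |Hseq n ω| ^ p) ℙ :=
      (aestronglyMeasurable_const.add
        (habsc.comp_aestronglyMeasurable hX.aestronglyMeasurable)).add
        (habsc.comp_aestronglyMeasurable (hHseq n).aestronglyMeasurable)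
    have asmb : AEStronglyMeasurable (fun ω => |Hseq n ω| ^ (2:ℝ)) ℙ :=
      ((Real.continuous_rpow_const (by norm_num : (0:ℝ) ≤ 2)).comp
        continuous_abs).comp_aestronglyMeasurable (hHseq n).aestronglyMeasurable
    have step1 : eLpNorm (fun ω => (f (X ω + t n * Hseq n ω) - f (X ω)) / t n
          - deriv f (X ω) * Hseq n ω) re ℙ ≤
        eLpNorm (fun ω => (t n * (C * 2 ^ p)) *
          ((1 + |X ω| ^ p + |Hseq n ω| ^ p) * |Hseq n ω| ^ (2:ℝ))) re ℙ := by
      refine eLpNorm_mono fun ω => ?_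
      rw [Real.norm_eq_abs, Real.norm_eq_abs]
      exact (hpt n htn ω).trans (le_abs_self _)
    have step2 : eLpNorm (fun ω => (t n * (C * 2 ^ p)) *
          ((1 + |X ω| ^ p + |Hseq n ω| ^ p) * |Hseq n ω| ^ (2:ℝ))) re ℙ =
        ENNReal.ofReal (t n * (C * 2 ^ p)) *
          eLpNorm (fun ω => (1 + |X ω| ^ p + |Hseq n ω| ^ p) * |Hseq n ω| ^ (2:ℝ)) re ℙ := by
      have h1 := eLpNorm_const_smul (c := t n * (C * 2 ^ p)) (𝕜 := ℝ)
        (fun ω => (1 + |X ω| ^ p + |Hseq n ω| ^ p) * |Hseq n ω| ^ (2:ℝ)) re ℙ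
      have h2 : ((t n * (C * 2 ^ p)) • fun ω =>
          (1 + |X ω| ^ p + |Hseq n ω| ^ p) * |Hseq n ω| ^ (2:ℝ)) =
          fun ω => (t n * (C * 2 ^ p)) *
            ((1 + |X ω| ^ p + |Hseq n ω| ^ p) * |Hseq n ω| ^ (2:ℝ)) := rfl
      rw [h2] at h1
      rw [h1, Real.enorm_eq_ofReal (mul_nonneg (htpos n).le (by positivity))]
    have step3 : eLpNorm (fun ω => (1 + |X ω| ^ p + |Hseq n ω| ^ p) * |Hseq n ω| ^ (2:ℝ)) re ℙ ≤
        (1 + EX ^ p + M ^ p) * M ^ (2:ℝ) := by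
      refine (holder _ _ asmA asmb).trans ?_
      refine mul_le_mul' ((hA n).trans ?_)
        ((hexpmono (Hseq n) 2 (hHseq n) two_pos (by linarith)).trans ?_)
      · exact add_le_add_right (ENNReal.rpow_le_rpow hMn hp0.le) _
      · exact ENNReal.rpow_le_rpow hMn (by norm_num)
    calc eLpNorm (fun ω => (f (X ω + t n * Hseq n ω) - f (X ω)) / t n
          - deriv f (X ω) * Hseq n ω) re ℙ
        ≤ ENNReal.ofReal (t n * (C * 2 ^ p)) *
          eLpNorm (fun ω => (1 + |X ω| ^ p + |Hseq n ω| ^ p) * |Hseq n ω| ^ (2:ℝ)) re ℙ := by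
          rw [← step2]; exact step1
      _ ≤ ENNReal.ofReal (t n * (C * 2 ^ p)) * ((1 + EX ^ p + M ^ p) * M ^ (2:ℝ)) :=
          mul_le_mul_right step3 _
      _ = ENNReal.ofReal (t n) * B := by
          rw [hBdef, ENNReal.ofReal_mul (htpos n).le, mul_assoc]
  -- decomposition of the error and squeeze
  have hDev : ∀ᶠ n in atTop,
      eLpNorm (fun ω => (f (X ω + t n * Hseq n ω) - f (X ω)) / t n
        - deriv f (X ω) * H ω) re ℙ ≤
      ENNReal.ofReal (t n) * B + G * eLpNorm (fun ω => Hseq n ω - H ω) qe ℙ := by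
    have htev : ∀ᶠ n in atTop, t n ≤ 1 :=
      (ht.eventually_lt_const (by norm_num : (0:ℝ) < 1)).mono fun n hn => hn.le
    filter_upwards [htev, hMev] with n h1 h2
    have hdecomp : (fun ω => (f (X ω + t n * Hseq n ω) - f (X ω)) / t n
          - deriv f (X ω) * H ω) =
        (fun ω => (f (X ω + t n * Hseq n ω) - f (X ω)) / t n - deriv f (X ω) * Hseq n ω)
          + fun ω => deriv f (X ω) * (Hseq n ω - H ω) := by
      funext ω
      simp only [Pi.add_apply]
      ring
    calc eLpNorm (fun ω => (f (X ω + t n * Hseq n ω) - f (X ω)) / t n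
          - deriv f (X ω) * H ω) re ℙ
        = eLpNorm ((fun ω => (f (X ω + t n * Hseq n ω) - f (X ω)) / t n
            - deriv f (X ω) * Hseq n ω)
          + fun ω => deriv f (X ω) * (Hseq n ω - H ω)) re ℙ := by rw [← hdecomp]
      _ ≤ eLpNorm (fun ω => (f (X ω + t n * Hseq n ω) - f (X ω)) / t n
            - deriv f (X ω) * Hseq n ω) re ℙ
          + eLpNorm (fun ω => deriv f (X ω) * (Hseq n ω - H ω)) re ℙ :=
          eLpNorm_add_le (hD1m n).1 (hD2m n).1 h1re
      _ ≤ ENNReal.ofReal (t n) * B + G * eLpNorm (fun ω => Hseq n ω - H ω) qe ℙ :=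
          add_le_add (hD1est n h1 h2) (hT2 n)
  have hlim : Tendsto (fun n => ENNReal.ofReal (t n) * B
      + G * eLpNorm (fun ω => Hseq n ω - H ω) qe ℙ) atTop (nhds 0) := by
    have l1 : Tendsto (fun n => ENNReal.ofReal (t n) * B) atTop (nhds 0) := by
      have h0 := ENNReal.Tendsto.mul_const (ENNReal.tendsto_ofReal ht) (Or.inr hBt)
      simpa using h0
    have := l1.add hT2lim
    simpa using this
  have hmain : Tendsto (fun n => eLpNorm
      (fun ω => (f (X ω + t n * Hseq n ω) - f (X ω)) / t n - deriv f (X ω) * H ω) re ℙ)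
      atTop (nhds 0) :=
    tendsto_of_tendsto_of_tendsto_of_le_of_le' tendsto_const_nhds hlim
      (Eventually.of_forall fun n => zero_le) hDev
  -- convert back to the integral form
  have hfin : ∀ n, (∫ ω, |(f (X ω + t n * Hseq n ω) - f (X ω)) / t n
      - deriv f (X ω) * H ω| ^ r ∂ℙ) ^ (1 / r) =
      (eLpNorm (fun ω => (f (X ω + t n * Hseq n ω) - f (X ω)) / t n
        - deriv f (X ω) * H ω) re ℙ).toReal := by
    intro n
    rw [(hDm n).eLpNorm_eq_integral_rpow_norm hre0 hret,
      ENNReal.toReal_ofReal (Real.rpow_nonneg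
        (integral_nonneg fun ω => Real.rpow_nonneg (norm_nonneg _) _) _)]
    simp [hre, ENNReal.toReal_ofReal hr0.le, Real.norm_eq_abs, one_div]
  have hfinal := (ENNReal.tendsto_toReal ENNReal.zero_ne_top).comp hmain
  rw [ENNReal.toReal_zero] at hfinal
  exact Tendsto.congr (fun n => (hfin n).symm) hfinal
end

section
/- For every T > 0, every M > 0, every C ≥ 0 and every natural number κ, there exists a constant C' > 0 such that the following holds: for all Borel-measurable functions K, K̄ : [0,T] → ℝ with ∫₀^T K(t)² dt ≤ M and ∫₀^T K̄(t)² dt ≤ M, and every twice continuously differentiable function φ : ℝ → ℝ satisfying |φ(x)| ≤ C(1+|x|^κ), |φ'(x)| ≤ C(1+|x|^κ) and |φ''(x)| ≤ C(1+|x|^κ) for all x ∈ ℝ, one has | ∫ φ dγ_{v̄} − ∫ φ dγ_{v} | ≤ C' ∫₀^T |K̄(t)² − K(t)²| dt, where v = ∫₀^T K(t)² dt and v̄ = ∫₀^T K̄(t)² dt. -/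
open MeasureTheory ProbabilityTheory Real

lemma integrable_abs_pow_mul_exp (n : ℕ) :
    Integrable (fun x : ℝ => |x| ^ n * Real.exp (-x ^ 2 / 2)) := by
  have h4 : Integrable (fun x : ℝ => Real.exp (-(4⁻¹ : ℝ) * x ^ 2)) :=
    integrable_exp_neg_mul_sq (by norm_num)
  refine (h4.const_mul ((1 : ℝ) + 4 ^ n * n.factorial)).mono' ?_ ?_
  · exact (((continuous_abs.pow n).mul
      (((continuous_pow 2).neg.div_const 2).rexp))).aestronglyMeasurable
  · filter_upwards with x
    have hfact : ((x ^ 2 / 4) ^ n) / (n.factorial : ℝ) ≤ Real.exp (x ^ 2 / 4) :=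
      Real.pow_div_factorial_le_exp _ (by positivity) n
    have hfp : (0:ℝ) < n.factorial := by exact_mod_cast n.factorial_pos
    have h2n : (x ^ 2) ^ n ≤ 4 ^ n * n.factorial * Real.exp (x ^ 2 / 4) := by
      have : (x ^ 2 / 4) ^ n = (x ^ 2) ^ n / 4 ^ n := by rw [div_pow]
      rw [this] at hfact
      rw [div_div] at hfact
      have h := (div_le_iff₀ (by positivity : (0:ℝ) < 4 ^ n * n.factorial)).mp hfact
      nlinarith [h]
    have habs : |x| ^ n ≤ 1 + 4 ^ n * n.factorial * Real.exp (x ^ 2 / 4) := by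
      rcases le_total (|x|) 1 with h | h
      · have h1 : |x| ^ n ≤ 1 := pow_le_one₀ (abs_nonneg x) h
        have hp : (0:ℝ) ≤ 4 ^ n * n.factorial * Real.exp (x ^ 2 / 4) := by positivity
        linarith
      · have h1 : |x| ^ n ≤ |x| ^ (2 * n) :=
          pow_le_pow_right₀ h (by omega)
        have h2 : |x| ^ (2 * n) = (x ^ 2) ^ n := by
          rw [pow_mul, sq_abs]
        nlinarith
    have hee : Real.exp (-x ^ 2 / 2) ≤ Real.exp (-(4⁻¹) * x ^ 2) := by
      apply Real.exp_le_exp.mpr; nlinarith [sq_nonneg x]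
    have hsplit : Real.exp (x ^ 2 / 4) * Real.exp (-x ^ 2 / 2) = Real.exp (-(4⁻¹) * x ^ 2) := by
      rw [← Real.exp_add]; ring_nf
    have hx0 : (0:ℝ) ≤ |x| ^ n * Real.exp (-x ^ 2 / 2) := by positivity
    rw [Real.norm_eq_abs, abs_of_nonneg hx0]
    calc |x| ^ n * Real.exp (-x ^ 2 / 2)
        ≤ (1 + 4 ^ n * n.factorial * Real.exp (x ^ 2 / 4)) * Real.exp (-x ^ 2 / 2) := by
          apply mul_le_mul_of_nonneg_right habs (Real.exp_nonneg _)
      _ = Real.exp (-x ^ 2 / 2) + 4 ^ n * n.factorial * (Real.exp (x^2/4) * Real.exp (-x^2/2)) := by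
          ring
      _ ≤ Real.exp (-(4⁻¹) * x ^ 2) + 4 ^ n * n.factorial * Real.exp (-(4⁻¹) * x ^ 2) := by
          rw [hsplit]
          exact add_le_add hee le_rfl
      _ = (1 + 4 ^ n * n.factorial) * Real.exp (-(4⁻¹) * x ^ 2) := by ring

lemma gaussian_moment (n : ℕ) :
    Integrable (fun x : ℝ => |x| ^ n) (gaussianReal 0 1) := by
  rw [gaussianReal_of_var_ne_zero 0 one_ne_zero,
    integrable_withDensity_iff (measurable_gaussianPDF 0 1)
      (Filter.Eventually.of_forall fun x => ENNReal.ofReal_lt_top)]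
  have hpdf : ∀ x : ℝ, (gaussianPDF 0 1 x).toReal = (√(2 * π))⁻¹ * Real.exp (-x ^ 2 / 2) := by
    intro x
    rw [gaussianPDF, ENNReal.toReal_ofReal (gaussianPDFReal_nonneg _ _ _)]
    simp [gaussianPDFReal]
  simp_rw [hpdf]
  have := (integrable_abs_pow_mul_exp n).const_mul (√(2 * π))⁻¹
  convert this using 2 with x
  · rfl
  · ring

lemma gaussian_mean_zero : ∫ x, x ∂(gaussianReal 0 1) = 0 := by
  have hmap : (gaussianReal 0 1).map (fun x => (-1 : ℝ) * x) = gaussianReal 0 1 := by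
    rw [show (fun x => (-1 : ℝ) * x) = ((-1 : ℝ) * ·) from rfl, gaussianReal_map_const_mul]
    norm_num
  have h1 : ∫ x, x ∂((gaussianReal 0 1).map (fun x => (-1 : ℝ) * x))
      = ∫ x, (-1 : ℝ) * x ∂(gaussianReal 0 1) :=
    integral_map (measurable_const_mul _).aemeasurable aestronglyMeasurable_id
  rw [hmap] at h1
  have h2 : ∫ x, (-1 : ℝ) * x ∂(gaussianReal 0 1) = -∫ x, x ∂(gaussianReal 0 1) := by
    simp only [neg_mul, one_mul]
    exact integral_neg _
  linarith


lemma gaussian_lipschitz (M C : ℝ) (hM : 0 < M) (hC : 0 ≤ C) (κ : ℕ) :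
    ∃ L, 0 ≤ L ∧ ∀ φ : ℝ → ℝ, ContDiff ℝ 2 φ →
      (∀ x : ℝ, |φ x| ≤ C * (1 + |x| ^ κ)) →
      (∀ x : ℝ, |deriv φ x| ≤ C * (1 + |x| ^ κ)) →
      (∀ x : ℝ, |deriv (deriv φ) x| ≤ C * (1 + |x| ^ κ)) →
      ∀ v w : ℝ, 0 ≤ v → v ≤ M → 0 ≤ w → w ≤ M →
        |(∫ x, φ x ∂(gaussianReal 0 w.toNNReal)) - ∫ x, φ x ∂(gaussianReal 0 v.toNNReal)|
          ≤ L * |w - v| := by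
  set γ := gaussianReal 0 1 with hγ
  set R := Real.sqrt M with hR
  have hR0 : 0 ≤ R := Real.sqrt_nonneg M
  set ψint : ℝ := ∫ x, (|x| ^ 2 + R ^ κ * |x| ^ (κ + 2)) ∂γ with hψ
  have hψ_int : Integrable (fun x : ℝ => |x| ^ 2 + R ^ κ * |x| ^ (κ + 2)) γ :=
    (gaussian_moment 2).add ((gaussian_moment (κ + 2)).const_mul _)
  have hψ0 : 0 ≤ ψint := integral_nonneg fun x => by positivity
  set L₀ : ℝ := C * ψint with hL₀def
  have hL₀ : 0 ≤ L₀ := mul_nonneg hC hψ0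
  refine ⟨L₀ / 2, by positivity, ?_⟩
  intro φ hφ hg0 hg1 hg2 v w hv hvM hw hwM
  -- regularity of φ
  have hφ' : Differentiable ℝ φ ∧ ContDiff ℝ 1 (deriv φ) := by
    have h2 : ContDiff ℝ ((1 : ℕ) + 1) φ := by exact_mod_cast hφ
    have := contDiff_succ_iff_deriv.mp h2
    exact ⟨this.1, this.2.2⟩
  have hφd : Differentiable ℝ φ := hφ'.1
  have hφc : Continuous φ := hφd.continuous
  have hφ'd : Differentiable ℝ (deriv φ) := hφ'.2.differentiable one_ne_zero
  have hφ'c : Continuous (deriv φ) := hφ'd.continuous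
  -- MVT bound on deriv φ
  have hMVT : ∀ y : ℝ, |deriv φ y - deriv φ 0| ≤ C * (1 + |y| ^ κ) * |y| := by
    intro y
    have hb : ∀ t ∈ Set.uIcc 0 y, ‖deriv (deriv φ) t‖ ≤ C * (1 + |y| ^ κ) := by
      intro t ht
      have h1 : |t| ≤ |y| := by
        rcases Set.mem_uIcc.mp ht with ⟨h, h'⟩ | ⟨h, h'⟩ <;> rw [abs_le] <;>
          constructor <;> nlinarith [le_abs_self y, neg_abs_le y, abs_nonneg y]
      have h2 : |t| ^ κ ≤ |y| ^ κ := pow_le_pow_left₀ (abs_nonneg t) h1 κ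
      calc ‖deriv (deriv φ) t‖ ≤ C * (1 + |t| ^ κ) := hg2 t
        _ ≤ C * (1 + |y| ^ κ) := by nlinarith
    have := (convex_uIcc (0:ℝ) y).norm_image_sub_le_of_norm_deriv_le
      (f := deriv φ) (fun t _ => (hφ'd t)) hb (Set.left_mem_uIcc) (Set.right_mem_uIcc)
    simpa using this
  -- the function g and its derivative
  set g : ℝ → ℝ := fun s => ∫ x, φ (s * x) ∂γ with hgdef
  set g' : ℝ → ℝ := fun s => ∫ x, deriv φ (s * x) * x ∂γ with hg'def
  have hgderiv : ∀ s₀ : ℝ, HasDerivAt g (g' s₀) s₀ := by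
    intro s₀
    have key := hasDerivAt_integral_of_dominated_loc_of_deriv_le (μ := γ)
      (F := fun s x => φ (s * x)) (F' := fun s x => deriv φ (s * x) * x)
      (x₀ := s₀) (s := Metric.ball s₀ 1)
      (bound := fun x => C * (|x| + (|s₀| + 1) ^ κ * |x| ^ (κ + 1)))
      (Metric.ball_mem_nhds s₀ one_pos)
      (Filter.Eventually.of_forall fun s =>
        (hφc.comp (continuous_const.mul continuous_id)).aestronglyMeasurable)
      ?_ ((hφ'c.comp (continuous_const.mul continuous_id)).mul
        continuous_id).aestronglyMeasurable ?_ ?_ ?_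
    · exact key.2
    · -- integrability of x ↦ φ (s₀ x)
      refine (((integrable_const C).add
        ((gaussian_moment κ).const_mul (C * |s₀| ^ κ))).mono'
        (hφc.comp (continuous_const.mul continuous_id)).aestronglyMeasurable ?_)
      filter_upwards with x
      have h1 := hg0 (s₀ * x)
      have h2 : |s₀ * x| ^ κ = |s₀| ^ κ * |x| ^ κ := by rw [abs_mul, mul_pow]
      rw [Real.norm_eq_abs]
      calc |φ (s₀ * x)| ≤ C * (1 + |s₀ * x| ^ κ) := h1
        _ = C + C * |s₀| ^ κ * |x| ^ κ := by rw [h2]; ring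
    · -- bound
      filter_upwards with x
      intro s hs
      have hs1 : |s| ≤ |s₀| + 1 := by
        have := mem_ball_iff_norm.mp hs
        rw [Real.norm_eq_abs] at this
        have h := abs_sub_abs_le_abs_sub s s₀
        linarith
      have h2 : |s * x| ^ κ ≤ (|s₀| + 1) ^ κ * |x| ^ κ := by
        rw [abs_mul, mul_pow]
        exact mul_le_mul_of_nonneg_right (pow_le_pow_left₀ (abs_nonneg s) hs1 κ)
          (by positivity)
      have h1 := hg1 (s * x)
      rw [Real.norm_eq_abs, abs_mul]
      calc |deriv φ (s * x)| * |x| ≤ (C * (1 + |s * x| ^ κ)) * |x| :=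
          mul_le_mul_of_nonneg_right h1 (abs_nonneg x)
        _ ≤ (C * (1 + (|s₀| + 1) ^ κ * |x| ^ κ)) * |x| := by gcongr
        _ = C * (|x| + (|s₀| + 1) ^ κ * |x| ^ (κ + 1)) := by ring
    · -- integrability of bound
      have h1 : Integrable (fun x : ℝ => |x|) γ := by
        have := gaussian_moment 1; simpa using this
      exact ((h1.add ((gaussian_moment (κ + 1)).const_mul ((|s₀| + 1) ^ κ))).const_mul C)
    · -- differentiability in s
      filter_upwards with x
      intro s _
      have h := ((hφd (s * x)).hasDerivAt).comp s (hasDerivAt_mul_const (c := x) (x := s))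
      exact h
  have hgc : Continuous g := by
    rw [continuous_iff_continuousAt]
    exact fun s => (hgderiv s).continuousAt
  -- bound on g'
  have hg'bound : ∀ s : ℝ, 0 ≤ s → s ≤ R → |g' s| ≤ L₀ * s := by
    intro s hs0 hsR
    have hint1 : Integrable (fun x : ℝ => (deriv φ (s * x) - deriv φ 0) * x) γ := by
      refine ((hψ_int.const_mul (s * C)).mono'
        (((hφ'c.comp (continuous_const.mul continuous_id)).sub continuous_const).mul
          continuous_id).aestronglyMeasurable ?_)
      filter_upwards with x
      rw [Real.norm_eq_abs, abs_mul]
      have h1 := hMVT (s * x)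
      have hsx : |s * x| = s * |x| := by rw [abs_mul, abs_of_nonneg hs0]
      have h2 : |s * x| ^ κ ≤ R ^ κ * |x| ^ κ := by
        rw [hsx, mul_pow]
        exact mul_le_mul_of_nonneg_right (pow_le_pow_left₀ hs0 hsR κ) (by positivity)
      calc |deriv φ (s * x) - deriv φ 0| * |x|
          ≤ (C * (1 + |s * x| ^ κ) * |s * x|) * |x| :=
            mul_le_mul_of_nonneg_right h1 (abs_nonneg x)
        _ = C * (1 + |s * x| ^ κ) * (s * (|x| * |x|)) := by rw [hsx]; ring
        _ ≤ C * (1 + R ^ κ * |x| ^ κ) * (s * (|x| * |x|)) := by gcongr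
        _ = s * C * (|x| ^ 2 + R ^ κ * |x| ^ (κ + 2)) := by ring
    have hint2 : Integrable (fun x : ℝ => deriv φ 0 * x) γ := by
      have h1 : Integrable (fun x : ℝ => x) γ := by
        refine (gaussian_moment 1).mono' measurable_id.aestronglyMeasurable ?_
        filter_upwards with x; simp
      exact h1.const_mul _
    have hsplit : g' s = (∫ x, (deriv φ (s * x) - deriv φ 0) * x ∂γ)
        + ∫ x, deriv φ 0 * x ∂γ := by
      simp only [hg'def]
      rw [← integral_add hint1 hint2]
      congr 1
      funext x
      ring
    have hzero : (∫ x, deriv φ 0 * x ∂γ) = 0 := by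
      rw [integral_const_mul, gaussian_mean_zero, mul_zero]
    have hbnd : |∫ x, (deriv φ (s * x) - deriv φ 0) * x ∂γ| ≤ s * C * ψint := by
      have := norm_integral_le_of_norm_le (μ := γ)
        (f := fun x => (deriv φ (s * x) - deriv φ 0) * x)
        (g := fun x => s * C * (|x| ^ 2 + R ^ κ * |x| ^ (κ + 2)))
        (hψ_int.const_mul (s * C)) ?_
      · rw [integral_const_mul] at this
        simpa [hψ] using this
      · filter_upwards with x
        rw [Real.norm_eq_abs, abs_mul]
        have h1 := hMVT (s * x)
        have hsx : |s * x| = s * |x| := by rw [abs_mul, abs_of_nonneg hs0]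
        have h2 : |s * x| ^ κ ≤ R ^ κ * |x| ^ κ := by
          rw [hsx, mul_pow]
          exact mul_le_mul_of_nonneg_right (pow_le_pow_left₀ hs0 hsR κ) (by positivity)
        calc |deriv φ (s * x) - deriv φ 0| * |x|
            ≤ (C * (1 + |s * x| ^ κ) * |s * x|) * |x| :=
              mul_le_mul_of_nonneg_right h1 (abs_nonneg x)
          _ = C * (1 + |s * x| ^ κ) * (s * (|x| * |x|)) := by rw [hsx]; ring
          _ ≤ C * (1 + R ^ κ * |x| ^ κ) * (s * (|x| * |x|)) := by gcongr
          _ = s * C * (|x| ^ 2 + R ^ κ * |x| ^ (κ + 2)) := by ring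
    rw [hsplit, hzero, add_zero, hL₀def]
    calc |∫ x, (deriv φ (s * x) - deriv φ 0) * x ∂γ| ≤ s * C * ψint := hbnd
      _ = C * ψint * s := by ring
  -- Lipschitz bound via monotonicity
  have hgL : ∀ a b : ℝ, 0 ≤ a → a ≤ b → b ≤ R →
      |g b - g a| ≤ L₀ / 2 * (b ^ 2 - a ^ 2) := by
    intro a b ha hab hbR
    have hderivq : ∀ s : ℝ, HasDerivAt (fun t : ℝ => L₀ * t ^ 2 / 2) (L₀ * s) s := by
      intro s
      have h := ((hasDerivAt_pow 2 s).const_mul L₀).div_const 2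
      simpa using h.congr_deriv (by ring)
    have key : ∀ (σ : ℝ), σ = 1 ∨ σ = -1 → (L₀ * a ^ 2 / 2 + σ * g a) ≤ L₀ * b ^ 2 / 2 + σ * g b := by
      intro σ hσ
      have hu : ∀ s : ℝ, HasDerivAt (fun t => L₀ * t ^ 2 / 2 + σ * g t) (L₀ * s + σ * g' s) s :=
        fun s => (hderivq s).add ((hgderiv s).const_mul σ)
      have hmono : MonotoneOn (fun t => L₀ * t ^ 2 / 2 + σ * g t) (Set.Icc 0 R) := by
        apply monotoneOn_of_deriv_nonneg (convex_Icc 0 R)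
        · exact ((continuous_const.mul ((continuous_pow 2))).div_const 2).continuousOn.add
            (continuous_const.mul hgc).continuousOn
        · intro s _
          exact (hu s).differentiableAt.differentiableWithinAt
        · intro s hs
          rw [interior_Icc] at hs
          rw [(hu s).deriv]
          have hb := hg'bound s hs.1.le (hs.2.le)
          have : |σ * g' s| ≤ L₀ * s := by
            rcases hσ with h | h <;> rw [h] <;> simpa [abs_mul] using hb
          have := neg_abs_le (σ * g' s)
          linarith
      have := hmono ⟨ha, le_trans hab hbR⟩ ⟨le_trans ha hab, hbR⟩ hab
      exact this
    have h1 := key 1 (Or.inl rfl)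
    have h2 := key (-1) (Or.inr rfl)
    rw [abs_le]
    constructor <;> [nlinarith; nlinarith]
  -- representation of the gaussian integral
  have hrep : ∀ u : ℝ, 0 ≤ u →
      (∫ x, φ x ∂(gaussianReal 0 u.toNNReal)) = g (Real.sqrt u) := by
    intro u hu
    have h1 : γ.map ((Real.sqrt u) * ·) = gaussianReal 0 u.toNNReal := by
      rw [hγ, gaussianReal_map_const_mul]
      congr 1
      · simp
      · ext
        simp [Real.sq_sqrt hu, Real.coe_toNNReal _ hu]
    rw [← h1, integral_map (measurable_const_mul _).aemeasurable hφc.aestronglyMeasurable]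
  -- conclude
  have main : ∀ v w : ℝ, 0 ≤ v → v ≤ M → 0 ≤ w → w ≤ M → v ≤ w →
      |(∫ x, φ x ∂(gaussianReal 0 w.toNNReal)) - ∫ x, φ x ∂(gaussianReal 0 v.toNNReal)|
        ≤ L₀ / 2 * |w - v| := by
    intro v w hv hvM hw hwM hvw
    rw [hrep v hv, hrep w hw]
    have h := hgL (Real.sqrt v) (Real.sqrt w) (Real.sqrt_nonneg v)
      (Real.sqrt_le_sqrt hvw) (Real.sqrt_le_sqrt hwM)
    rw [Real.sq_sqrt hw, Real.sq_sqrt hv] at h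
    have habs : |w - v| = w - v := abs_of_nonneg (by linarith)
    rw [habs]
    exact h
  rcases le_total v w with h | h
  · exact main v w hv hvM hw hwM h
  · rw [abs_sub_comm, abs_sub_comm w v]
    exact main w v hw hwM hv hvM h


/-- Weak error bound between two Gaussian Volterra marginals: the difference of the expectations
of `φ` under the centered Gaussian laws with variances `∫₀ᵀ K̄²` and `∫₀ᵀ K²` is controlled by
the `L¹` norm of `K̄² - K²`, with a constant depending only on `T`, `M`, `C`, `κ`. -/
theorem gaussian_weak_error_kernel_squares
    (T M C : ℝ) (hT : 0 < T) (hM : 0 < M) (hC : 0 ≤ C) (κ : ℕ) :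
    ∃ C' > 0, ∀ (K Kb : ℝ → ℝ), Measurable K → Measurable Kb →
      IntegrableOn (fun t => K t ^ 2) (Set.Ioc 0 T) →
      IntegrableOn (fun t => Kb t ^ 2) (Set.Ioc 0 T) →
      (∫ t in Set.Ioc (0 : ℝ) T, K t ^ 2) ≤ M →
      (∫ t in Set.Ioc (0 : ℝ) T, Kb t ^ 2) ≤ M →
      ∀ φ : ℝ → ℝ, ContDiff ℝ 2 φ →
        (∀ x : ℝ, |φ x| ≤ C * (1 + |x| ^ κ)) →
        (∀ x : ℝ, |deriv φ x| ≤ C * (1 + |x| ^ κ)) →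
        (∀ x : ℝ, |deriv (deriv φ) x| ≤ C * (1 + |x| ^ κ)) →
        |(∫ x, φ x ∂(gaussianReal 0 (∫ t in Set.Ioc (0 : ℝ) T, Kb t ^ 2).toNNReal)) -
            ∫ x, φ x ∂(gaussianReal 0 (∫ t in Set.Ioc (0 : ℝ) T, K t ^ 2).toNNReal)| ≤
          C' * ∫ t in Set.Ioc (0 : ℝ) T, |Kb t ^ 2 - K t ^ 2| := by
  obtain ⟨L, hL0, hLip⟩ := gaussian_lipschitz M C hM hC κ
  refine ⟨L + 1, by linarith, ?_⟩
  intro K Kb hK hKb hIK hIKb hKM hKbM φ hφ h0 h1 h2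
  set v := ∫ t in Set.Ioc (0 : ℝ) T, K t ^ 2 with hvdef
  set w := ∫ t in Set.Ioc (0 : ℝ) T, Kb t ^ 2 with hwdef
  have hv0 : 0 ≤ v := integral_nonneg fun t => sq_nonneg _
  have hw0 : 0 ≤ w := integral_nonneg fun t => sq_nonneg _
  have h := hLip φ hφ h0 h1 h2 v w hv0 hKM hw0 hKbM
  have habs : |w - v| ≤ ∫ t in Set.Ioc (0 : ℝ) T, |Kb t ^ 2 - K t ^ 2| := by
    have hsub : w - v = ∫ t in Set.Ioc (0 : ℝ) T, (Kb t ^ 2 - K t ^ 2) :=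
      (integral_sub hIKb hIK).symm
    rw [hsub]
    have := norm_integral_le_integral_norm (μ := volume.restrict (Set.Ioc (0:ℝ) T))
      (f := fun t => Kb t ^ 2 - K t ^ 2)
    simpa [Real.norm_eq_abs] using this
  have hnn : 0 ≤ ∫ t in Set.Ioc (0 : ℝ) T, |Kb t ^ 2 - K t ^ 2| :=
    integral_nonneg fun t => abs_nonneg _
  calc |(∫ x, φ x ∂(gaussianReal 0 w.toNNReal)) - ∫ x, φ x ∂(gaussianReal 0 v.toNNReal)|
      ≤ L * |w - v| := h
    _ ≤ L * ∫ t in Set.Ioc (0 : ℝ) T, |Kb t ^ 2 - K t ^ 2| :=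
        mul_le_mul_of_nonneg_left habs hL0
    _ ≤ (L + 1) * ∫ t in Set.Ioc (0 : ℝ) T, |Kb t ^ 2 - K t ^ 2| := by nlinarith
end

section
/- Let φ : ℝ → ℝ be twice continuously differentiable and suppose there exist C ≥ 0 and a natural number κ such that |φ(x)| ≤ C(1+|x|^κ), |φ'(x)| ≤ C(1+|x|^κ) and |φ''(x)| ≤ C(1+|x|^κ) for all x ∈ ℝ. Then the function v ↦ ∫ φ dγ_v is differentiable at every v > 0, with derivative (1/2) ∫ φ'' dγ_v. -/
open MeasureTheory ProbabilityTheory Real Filter Set Metric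
open scoped NNReal ENNReal


lemma aux_pow_le (t : ℝ) (ht : 0 ≤ t) (k : ℕ) : t ^ k ≤ 1 + t ^ (k+1) := by
  rcases le_or_gt t 1 with h | h
  · have : t ^ k ≤ 1 := pow_le_one₀ ht h
    nlinarith [pow_nonneg ht (k+1)]
  · have : t ^ k ≤ t ^ (k+1) := pow_le_pow_right₀ h.le (Nat.le_succ k)
    linarith

lemma aux_le (t : ℝ) (ht : 0 ≤ t) (k : ℕ) : t ≤ 1 + t ^ (k+1) := by
  have := aux_pow_le t ht 0
  rcases le_or_gt t 1 with h | h
  · nlinarith [pow_nonneg ht (k+1)]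
  · have : t ^ 1 ≤ t ^ (k+1) := pow_le_pow_right₀ h.le (by omega)
    simp only [pow_one] at this
    linarith


lemma integrable_abs_pow_mul_gauss (k : ℕ) {b : ℝ} (hb : 0 < b) :
    Integrable (fun x : ℝ => |x| ^ k * Real.exp (-b * x ^ 2)) := by
  have hk : (-1 : ℝ) < (k : ℝ) := neg_one_lt_zero.trans_le (Nat.cast_nonneg k)
  have hIoi : IntegrableOn (fun x : ℝ => |x| ^ k * Real.exp (-b * x ^ 2)) (Ioi 0) := by
    refine (integrableOn_rpow_mul_exp_neg_mul_sq hb hk).congr_fun (fun x hx => ?_)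
      measurableSet_Ioi
    rw [abs_of_pos hx]; simp only [Real.rpow_natCast]
  rw [← integrableOn_univ, ← Set.Iio_union_Ici (a := (0:ℝ)), integrableOn_union,
    integrableOn_Ici_iff_integrableOn_Ioi]
  constructor
  · rw [← (Measure.measurePreserving_neg (volume : Measure ℝ)).integrableOn_comp_preimage
        (Homeomorph.neg ℝ).measurableEmbedding]
    simp only [Function.comp_def, neg_sq, neg_preimage, Set.neg_Iio, neg_neg, neg_zero, abs_neg]
    exact hIoi
  · exact hIoi

lemma integrable_poly_mul_gauss (k : ℕ) {b : ℝ} (hb : 0 < b) :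
    Integrable (fun x : ℝ => (1 + |x| ^ k) * Real.exp (-b * x ^ 2)) := by
  have h1 : Integrable (fun x : ℝ => Real.exp (-b * x ^ 2)) := integrable_exp_neg_mul_sq hb
  simpa [add_mul, one_mul, Pi.add_def] using h1.add (integrable_abs_pow_mul_gauss k hb)

lemma gaussian_density_meas (v : ℝ≥0) :
    Measurable (fun x => (gaussianPDFReal 0 v x).toNNReal) :=
  (measurable_gaussianPDFReal 0 v).real_toNNReal

lemma integral_gaussianReal_eq (v : ℝ≥0) (hv : v ≠ 0) (f : ℝ → ℝ) :
    ∫ x, f x ∂(gaussianReal 0 v) = ∫ x, gaussianPDFReal 0 v x * f x := by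
  rw [gaussianReal_of_var_ne_zero 0 hv]
  have h : (gaussianPDF 0 v) = fun x => ((gaussianPDFReal 0 v x).toNNReal : ℝ≥0∞) := rfl
  rw [h, integral_withDensity_eq_integral_smul (gaussian_density_meas v)]
  congr 1; funext x
  simp [NNReal.smul_def, Real.coe_toNNReal _ (gaussianPDFReal_nonneg 0 v x)]

lemma integrable_gaussianReal_iff (v : ℝ≥0) (hv : v ≠ 0) (f : ℝ → ℝ) :
    Integrable f (gaussianReal 0 v) ↔
      Integrable (fun x => gaussianPDFReal 0 v x * f x) := by
  rw [gaussianReal_of_var_ne_zero 0 hv]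
  have h : (gaussianPDF 0 v) = fun x => ((gaussianPDFReal 0 v x).toNNReal : ℝ≥0∞) := rfl
  rw [h, integrable_withDensity_iff_integrable_smul (gaussian_density_meas v)]
  constructor <;> intro hh <;>
  · refine hh.congr (Filter.Eventually.of_forall fun x => ?_)
    simp [NNReal.smul_def, Real.coe_toNNReal _ (gaussianPDFReal_nonneg 0 v x)]

lemma gaussianPDFReal_le (v : ℝ≥0) (hv : v ≠ 0) (x : ℝ) :
    gaussianPDFReal 0 v x ≤ (√(2 * π * v))⁻¹ * Real.exp (-(2 * (v:ℝ))⁻¹ * x ^ 2) := by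
  unfold gaussianPDFReal
  refine le_of_eq ?_
  congr 1
  rw [sub_zero]
  ring_nf

lemma integrable_of_poly_growth {f : ℝ → ℝ} (hf : Continuous f)
    {A : ℝ} {k : ℕ} (hbd : ∀ x, |f x| ≤ A * (1 + |x| ^ k)) (v : ℝ≥0) (hv : v ≠ 0) :
    Integrable f (gaussianReal 0 v) := by
  rw [integrable_gaussianReal_iff v hv]
  have hvpos : (0:ℝ) < (v:ℝ) := by
    rcases eq_or_lt_of_le v.coe_nonneg with h | h
    · exact absurd (by exact_mod_cast h.symm) hv
    · exact h
  have hb : (0:ℝ) < (2 * (v:ℝ))⁻¹ := by positivity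
  refine Integrable.mono' (((integrable_poly_mul_gauss k hb).const_mul
      ((√(2 * π * v))⁻¹ * A))) ?_ (Filter.Eventually.of_forall fun x => ?_)
  · exact (((measurable_gaussianPDFReal 0 v).mul hf.measurable).aestronglyMeasurable)
  · have h1 : ‖gaussianPDFReal 0 v x * f x‖ = gaussianPDFReal 0 v x * |f x| := by
      rw [norm_mul, Real.norm_eq_abs, Real.norm_eq_abs,
        abs_of_nonneg (gaussianPDFReal_nonneg 0 v x)]
    rw [h1]
    calc gaussianPDFReal 0 v x * |f x|
        ≤ ((√(2 * π * v))⁻¹ * Real.exp (-(2 * (v:ℝ))⁻¹ * x ^ 2)) * (A * (1 + |x| ^ k)) := by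
          refine mul_le_mul (gaussianPDFReal_le v hv x) (hbd x) (abs_nonneg _) ?_
          positivity
      _ = (√(2 * π * v))⁻¹ * A * ((1 + |x| ^ k) * Real.exp (-(2 * (v:ℝ))⁻¹ * x ^ 2)) := by ring



lemma gaussianReal_scaling (w : ℝ) (hw : 0 < w) :
    gaussianReal 0 (Real.toNNReal w) = (gaussianReal 0 1).map (fun x => √w * x) := by
  have := gaussianReal_map_const_mul (μ := 0) (v := 1) (√w)
  rw [show ((√w * ·) : ℝ → ℝ) = fun x => √w * x from rfl] at this
  rw [this, mul_zero]
  congr 1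
  ext
  simp [Real.sq_sqrt hw.le, Real.coe_toNNReal _ hw.le]

lemma integral_gaussianReal_scale (w : ℝ) (hw : 0 < w) (f : ℝ → ℝ) (hf : Continuous f) :
    ∫ x, f x ∂(gaussianReal 0 (Real.toNNReal w))
      = ∫ x, f (√w * x) ∂(gaussianReal 0 1) := by
  rw [gaussianReal_scaling w hw,
    integral_map (by fun_prop) hf.aestronglyMeasurable]



lemma rho_hasDerivAt (x : ℝ) :
    HasDerivAt (fun x : ℝ => Real.exp (-(1/2 : ℝ) * x ^ 2))
      (Real.exp (-(1/2 : ℝ) * x ^ 2) * (-x)) x := by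
  have h1 : HasDerivAt (fun x : ℝ => -(1/2 : ℝ) * x ^ 2) (-x) x := by
    have := (hasDerivAt_pow 2 x).const_mul (-(1/2 : ℝ))
    refine this.congr_deriv ?_
    push_cast; ring
  exact h1.exp

lemma gaussianPDFReal_one (x : ℝ) :
    gaussianPDFReal 0 1 x = (√(2 * π))⁻¹ * Real.exp (-(1/2 : ℝ) * x ^ 2) := by
  unfold gaussianPDFReal
  have h1 : 2 * π * ((1:ℝ≥0):ℝ) = 2 * π := by norm_num
  have h2 : -(x - 0) ^ 2 / (2 * ((1:ℝ≥0):ℝ)) = -(1/2 : ℝ) * x ^ 2 := by norm_num; ring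
  rw [h1, h2]

lemma gaussian_ibp {g : ℝ → ℝ} (hg : Differentiable ℝ g) (hg' : Continuous (deriv g))
    {A : ℝ} {k : ℕ} (hA : 0 ≤ A) (hb : ∀ x, |g x| ≤ A * (1 + |x| ^ k))
    (hb' : ∀ x, |deriv g x| ≤ A * (1 + |x| ^ k)) :
    ∫ x, x * g x ∂(gaussianReal 0 1) = ∫ x, deriv g x ∂(gaussianReal 0 1) := by
  set ρ : ℝ → ℝ := fun x => Real.exp (-(1/2 : ℝ) * x ^ 2) with hρ
  have hρpos : ∀ x, 0 < ρ x := fun x => Real.exp_pos _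
  -- pointwise bounds
  have key_bd : ∀ x : ℝ, (1 + |x|) * (1 + |x| ^ k) ≤ 3 * (1 + |x| ^ (k+1)) := by
    intro x
    have h1 := aux_le |x| (abs_nonneg x) k
    have h2 := aux_pow_le |x| (abs_nonneg x) k
    have h3 : |x| ^ (k+1) = |x| ^ k * |x| := pow_succ _ _
    nlinarith [abs_nonneg x, pow_nonneg (abs_nonneg x) k, pow_nonneg (abs_nonneg x) (k+1)]
  -- derivative of g x * ρ x
  have hder : ∀ x : ℝ, HasDerivAt (fun x => g x * ρ x)
      ((deriv g x - x * g x) * ρ x) x := by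
    intro x
    have := ((hg x).hasDerivAt).mul (rho_hasDerivAt x)
    refine this.congr_deriv ?_
    simp only [hρ]; ring
  -- integrability of g * ρ
  have int_gρ : Integrable (fun x => g x * ρ x) := by
    refine Integrable.mono' ((integrable_poly_mul_gauss k (b := (1/2:ℝ)) one_half_pos).const_mul A)
      ((hg.continuous.mul (by fun_prop)).aestronglyMeasurable)
      (Filter.Eventually.of_forall fun x => ?_)
    have : ‖g x * ρ x‖ = |g x| * ρ x := by
      rw [norm_mul, Real.norm_eq_abs, Real.norm_eq_abs, abs_of_pos (hρpos x)]
    rw [this]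
    calc |g x| * ρ x ≤ (A * (1 + |x| ^ k)) * ρ x :=
          mul_le_mul_of_nonneg_right (hb x) (hρpos x).le
      _ = A * ((1 + |x| ^ k) * ρ x) := by ring
  -- integrability of x * g x * ρ x
  have int_xgρ : Integrable (fun x => x * g x * ρ x) := by
    refine Integrable.mono'
      ((integrable_poly_mul_gauss (k+1) (b := (1/2:ℝ)) one_half_pos).const_mul (3 * A))
      (((continuous_id.mul hg.continuous).mul (by fun_prop)).aestronglyMeasurable)
      (Filter.Eventually.of_forall fun x => ?_)
    have he : ‖x * g x * ρ x‖ = |x| * |g x| * ρ x := by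
      rw [norm_mul, norm_mul, Real.norm_eq_abs, Real.norm_eq_abs, Real.norm_eq_abs,
        abs_of_pos (hρpos x)]
    rw [he]
    have h1 : |x| * |g x| ≤ (1 + |x|) * (A * (1 + |x| ^ k)) := by
      have := hb x
      nlinarith [abs_nonneg x, abs_nonneg (g x), pow_nonneg (abs_nonneg x) k]
    calc |x| * |g x| * ρ x ≤ ((1 + |x|) * (A * (1 + |x| ^ k))) * ρ x :=
          mul_le_mul_of_nonneg_right h1 (hρpos x).le
      _ = A * ((1 + |x|) * (1 + |x| ^ k)) * ρ x := by ring
      _ ≤ A * (3 * (1 + |x| ^ (k+1))) * ρ x := by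
          refine mul_le_mul_of_nonneg_right ?_ (hρpos x).le
          exact mul_le_mul_of_nonneg_left (key_bd x) hA
      _ = 3 * A * ((1 + |x| ^ (k+1)) * ρ x) := by ring
  -- integrability of deriv g * ρ
  have int_g'ρ : Integrable (fun x => deriv g x * ρ x) := by
    refine Integrable.mono' ((integrable_poly_mul_gauss k (b := (1/2:ℝ)) one_half_pos).const_mul A)
      ((hg'.mul (by fun_prop)).aestronglyMeasurable)
      (Filter.Eventually.of_forall fun x => ?_)
    have : ‖deriv g x * ρ x‖ = |deriv g x| * ρ x := by
      rw [norm_mul, Real.norm_eq_abs, Real.norm_eq_abs, abs_of_pos (hρpos x)]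
    rw [this]
    calc |deriv g x| * ρ x ≤ (A * (1 + |x| ^ k)) * ρ x :=
          mul_le_mul_of_nonneg_right (hb' x) (hρpos x).le
      _ = A * ((1 + |x| ^ k) * ρ x) := by ring
  -- integration by parts on volume
  have int_der : Integrable (fun x => (deriv g x - x * g x) * ρ x) := by
    have : (fun x => (deriv g x - x * g x) * ρ x)
        = fun x => deriv g x * ρ x - x * g x * ρ x := by funext x; ring
    rw [this]; exact int_g'ρ.sub int_xgρ
  have hzero : ∫ x, (deriv g x - x * g x) * ρ x = 0 :=
    integral_eq_zero_of_hasDerivAt_of_integrable hder int_der int_gρ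
  have hvol : ∫ x, x * g x * ρ x = ∫ x, deriv g x * ρ x := by
    have : ∫ x, (deriv g x - x * g x) * ρ x
        = (∫ x, deriv g x * ρ x) - ∫ x, x * g x * ρ x := by
      rw [show (fun x => (deriv g x - x * g x) * ρ x)
          = fun x => deriv g x * ρ x - x * g x * ρ x from funext fun x => by ring]
      exact integral_sub int_g'ρ int_xgρ
    linarith [hzero, this]
  -- translate to gaussianReal
  rw [integral_gaussianReal_eq 1 one_ne_zero, integral_gaussianReal_eq 1 one_ne_zero]
  simp only [gaussianPDFReal_one]
  calc ∫ x, (√(2 * π))⁻¹ * ρ x * (x * g x)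
      = (√(2 * π))⁻¹ * ∫ x, x * g x * ρ x := by
        rw [← integral_const_mul]; congr 1; funext x; ring
    _ = (√(2 * π))⁻¹ * ∫ x, deriv g x * ρ x := by rw [hvol]
    _ = ∫ x, (√(2 * π))⁻¹ * ρ x * deriv g x := by
        rw [← integral_const_mul]; congr 1; funext x; ring



lemma aux_comp_bound {f : ℝ → ℝ} {C : ℝ} {κ : ℕ} (hC : 0 ≤ C)
    (hf : ∀ y, |f y| ≤ C * (1 + |y| ^ κ)) {c : ℝ} (hc : 0 ≤ c) (x : ℝ) :
    |f (c * x)| ≤ C * (1 + c ^ κ) * (1 + |x| ^ κ) := by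
  have h1 : |c * x| ^ κ = c ^ κ * |x| ^ κ := by
    rw [abs_mul, mul_pow, abs_of_nonneg hc]
  have h2 := hf (c * x)
  have h3 : (0:ℝ) ≤ c ^ κ := pow_nonneg hc κ
  have h4 : (0:ℝ) ≤ |x| ^ κ := pow_nonneg (abs_nonneg x) κ
  nlinarith [mul_nonneg h3 h4]

/-- Differentiability of the Gaussian expectation in the variance parameter: for a `C²`
function `φ` with polynomial growth (together with its first two derivatives), the map
`v ↦ ∫ φ dγ_v` is differentiable at every `v > 0` with derivative `(1/2) ∫ φ'' dγ_v`. -/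
theorem gaussian_expectation_hasDerivAt_variance
    (φ : ℝ → ℝ) (hφ : ContDiff ℝ 2 φ)
    (C : ℝ) (hC : 0 ≤ C) (κ : ℕ)
    (h0 : ∀ x : ℝ, |φ x| ≤ C * (1 + |x| ^ κ))
    (h1 : ∀ x : ℝ, |deriv φ x| ≤ C * (1 + |x| ^ κ))
    (h2 : ∀ x : ℝ, |deriv (deriv φ) x| ≤ C * (1 + |x| ^ κ))
    (v : ℝ) (hv : 0 < v) :
    HasDerivAt (fun w : ℝ => ∫ x, φ x ∂(gaussianReal 0 (Real.toNNReal w)))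
      ((1 / 2) * ∫ x, deriv (deriv φ) x ∂(gaussianReal 0 (Real.toNNReal v))) v := by
  -- smoothness facts
  have h2' : ContDiff ℝ (1 + 1) φ := by
    rw [one_add_one_eq_two]; exact_mod_cast hφ
  obtain ⟨hφd, -, hφ'1⟩ := contDiff_succ_iff_deriv.mp h2'
  obtain ⟨hφ'd, hφ''c⟩ := contDiff_one_iff_deriv.mp hφ'1
  have hφc : Continuous φ := hφd.continuous
  have hφ'c : Continuous (deriv φ) := hφ'd.continuous
  set γ : Measure ℝ := gaussianReal 0 1 with hγ
  have hsv : (0:ℝ) < √v := Real.sqrt_pos.mpr hv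
  -- eventual equality with the scaled integral
  have heq : (fun w : ℝ => ∫ x, φ x ∂(gaussianReal 0 (Real.toNNReal w)))
      =ᶠ[nhds v] (fun w : ℝ => ∫ x, φ (√w * x) ∂γ) := by
    filter_upwards [eventually_gt_nhds hv] with w hw
    exact integral_gaussianReal_scale w hw φ hφc
  -- derivative of the scaled integral
  set F' : ℝ → ℝ → ℝ := fun w x => deriv φ (√w * x) * (1 / (2 * √w) * x) with hF'
  set M : ℝ := 2 * (C * (1 + √(2*v) ^ κ)) * (1 / (2 * √(v/2))) with hM
  have hM0 : 0 ≤ M := by positivity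
  have key : HasDerivAt (fun w : ℝ => ∫ x, φ (√w * x) ∂γ) (∫ x, F' v x ∂γ) v := by
    refine (hasDerivAt_integral_of_dominated_loc_of_deriv_le (s := ball v (v/2))
      (bound := fun x => M * (1 + |x| ^ (κ+1))) (ball_mem_nhds v (by positivity))
      (Filter.Eventually.of_forall fun w =>
        (hφc.comp (continuous_const.mul continuous_id)).aestronglyMeasurable)
      ?_ ?_ ?_ ?_ ?_).2
    · -- integrability of F v
      refine integrable_of_poly_growth (hφc.comp (continuous_const.mul continuous_id))
        (A := C * (1 + √v ^ κ)) (k := κ) (fun x => aux_comp_bound hC h0 hsv.le x) 1 one_ne_zero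
    · -- measurability of F' v
      exact (((hφ'c.comp (continuous_const.mul continuous_id)).mul
        (continuous_const.mul continuous_id)).aestronglyMeasurable)
    · -- bound
      refine Filter.Eventually.of_forall fun x => fun w hw => ?_
      have hwl : v/2 < w := by
        have := abs_lt.mp (mem_ball_iff_norm.mp hw); linarith [this.1]
      have hwu : w < 2*v := by
        have := abs_lt.mp (mem_ball_iff_norm.mp hw); linarith [this.2]
      have hw0 : 0 < w := lt_trans (by positivity) hwl
      have hsw : 0 < √w := Real.sqrt_pos.mpr hw0
      have hswu : √w ≤ √(2*v) := Real.sqrt_le_sqrt hwu.le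
      have hswl : √(v/2) ≤ √w := Real.sqrt_le_sqrt hwl.le
      have hsvl : 0 < √(v/2) := Real.sqrt_pos.mpr (by positivity)
      have hb1 : |deriv φ (√w * x)| ≤ C * (1 + √(2*v) ^ κ) * (1 + |x| ^ κ) := by
        refine (aux_comp_bound hC h1 hsw.le x).trans ?_
        have h3 : √w ^ κ ≤ √(2*v) ^ κ := pow_le_pow_left₀ hsw.le hswu κ
        gcongr
      have hb2 : |1 / (2 * √w) * x| ≤ 1 / (2 * √(v/2)) * |x| := by
        rw [abs_mul]
        refine mul_le_mul_of_nonneg_right ?_ (abs_nonneg x)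
        rw [abs_of_pos (by positivity)]
        refine one_div_le_one_div_of_le (by positivity) (by linarith)
      have hprod : ‖F' w x‖ ≤ (C * (1 + √(2*v) ^ κ) * (1 + |x| ^ κ)) *
          (1 / (2 * √(v/2)) * |x|) := by
        rw [hF', Real.norm_eq_abs, abs_mul]
        exact mul_le_mul hb1 hb2 (abs_nonneg _) (by positivity)
      refine hprod.trans ?_
      show _ ≤ M * (1 + |x| ^ (κ+1))
      have e1 : (1 + |x| ^ κ) * |x| ≤ 2 * (1 + |x| ^ (κ+1)) := by
        have ha := aux_le |x| (abs_nonneg x) κ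
        have hb := aux_pow_le |x| (abs_nonneg x) κ
        have hc' : |x| ^ (κ+1) = |x| ^ κ * |x| := pow_succ _ _
        nlinarith [abs_nonneg x, pow_nonneg (abs_nonneg x) κ, pow_nonneg (abs_nonneg x) (κ+1)]
      calc (C * (1 + √(2*v) ^ κ) * (1 + |x| ^ κ)) * (1 / (2 * √(v/2)) * |x|)
          = (C * (1 + √(2*v) ^ κ)) * (1 / (2 * √(v/2))) * ((1 + |x| ^ κ) * |x|) := by ring
        _ ≤ (C * (1 + √(2*v) ^ κ)) * (1 / (2 * √(v/2))) * (2 * (1 + |x| ^ (κ+1))) := by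
            refine mul_le_mul_of_nonneg_left e1 (by positivity)
        _ = M * (1 + |x| ^ (κ+1)) := by rw [hM]; ring
    · -- integrability of the bound
      refine integrable_of_poly_growth (by fun_prop) (A := M) (k := κ+1)
        (fun x => ?_) 1 one_ne_zero
      rw [abs_of_nonneg (by positivity)]
    · -- differentiability in w
      refine Filter.Eventually.of_forall fun x => fun w hw => ?_
      have hwl : v/2 < w := by
        have := abs_lt.mp (mem_ball_iff_norm.mp hw); linarith [this.1]
      have hw0 : 0 < w := lt_trans (by positivity) hwl
      have hinner : HasDerivAt (fun w : ℝ => √w * x) (1 / (2 * √w) * x) w :=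
        (Real.hasDerivAt_sqrt hw0.ne').mul_const x
      have := (hφd (√w * x)).hasDerivAt.comp w hinner
      exact this
  -- identify the derivative value
  have hval : ∫ x, F' v x ∂γ
      = (1 / 2) * ∫ x, deriv (deriv φ) x ∂(gaussianReal 0 (Real.toNNReal v)) := by
    set g : ℝ → ℝ := fun x => deriv φ (√v * x) with hg
    have hgder : ∀ x, HasDerivAt g (deriv (deriv φ) (√v * x) * √v) x := by
      intro x
      have hinner : HasDerivAt (fun x : ℝ => √v * x) (√v) x := by
        simpa using (hasDerivAt_id x).const_mul (√v)
      exact (hφ'd (√v * x)).hasDerivAt.comp x hinner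
    have hgd : Differentiable ℝ g := fun x => (hgder x).differentiableAt
    have hgderiv : deriv g = fun x => deriv (deriv φ) (√v * x) * √v :=
      funext fun x => (hgder x).deriv
    have hibp : ∫ x, x * g x ∂γ = ∫ x, deriv g x ∂γ := by
      refine gaussian_ibp hgd (by rw [hgderiv]; fun_prop)
        (A := (1 + √v) * (C * (1 + √v ^ κ))) (k := κ) (by positivity) (fun x => ?_) (fun x => ?_)
      · refine (aux_comp_bound hC h1 hsv.le x).trans ?_
        have h4 : (0:ℝ) ≤ C * (1 + √v ^ κ) * (1 + |x| ^ κ) := by positivity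
        nlinarith [mul_nonneg (mul_nonneg (mul_nonneg hsv.le hC) (by positivity : (0:ℝ) ≤ 1 + √v ^ κ)) (by positivity : (0:ℝ) ≤ 1 + |x| ^ κ)]
      · rw [hgderiv]
        have := aux_comp_bound hC h2 hsv.le x
        rw [abs_mul, abs_of_pos hsv]
        calc |deriv (deriv φ) (√v * x)| * √v ≤ (C * (1 + √v ^ κ) * (1 + |x| ^ κ)) * √v := by
              exact mul_le_mul_of_nonneg_right this hsv.le
          _ ≤ (1 + √v) * (C * (1 + √v ^ κ)) * (1 + |x| ^ κ) := by
              nlinarith [mul_nonneg hC (by positivity : (0:ℝ) ≤ 1 + √v ^ κ),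
                (by positivity : (0:ℝ) ≤ 1 + |x| ^ κ)]
    calc ∫ x, F' v x ∂γ = (1 / (2 * √v)) * ∫ x, x * g x ∂γ := by
          rw [← integral_const_mul]; congr 1; funext x; rw [hF', hg]; ring
      _ = (1 / (2 * √v)) * ∫ x, deriv g x ∂γ := by rw [hibp]
      _ = (1 / (2 * √v)) * (√v * ∫ x, deriv (deriv φ) (√v * x) ∂γ) := by
          congr 1
          rw [← integral_const_mul, hgderiv]
          congr 1; funext x; ring
      _ = (1 / 2) * ∫ x, deriv (deriv φ) (√v * x) ∂γ := by
          field_simp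
      _ = (1 / 2) * ∫ x, deriv (deriv φ) x ∂(gaussianReal 0 (Real.toNNReal v)) := by
          rw [integral_gaussianReal_scale v hv _ hφ''c]
  rw [← hval]
  exact key.congr_of_eventuallyEq heq
end

section
/- Let T > 0 and let K : [0,T] → ℝ be continuous with K(s) > 0 for all s ∈ (0,T]. Let φ : ℝ → ℝ be twice continuously differentiable with |φ(x)| ≤ C(1+|x|^κ), |φ'(x)| ≤ C(1+|x|^κ) and |φ''(x)| ≤ C(1+|x|^κ) for all x ∈ ℝ, for some C ≥ 0 and natural number κ. For t ∈ [0,T] set v(t) = ∫_t^T K(T-s)² ds and define u(t,x) = ∫ φ(x + z) dγ_{v(t)}(z). Then for every t ∈ (0,T) and x ∈ ℝ, the partial derivative ∂_t u(t,x) exists, the second partial derivative ∂²_{xx} u(t,x) exists and equals ∫ φ''(x+z) dγ_{v(t)}(z), and together they satisfy the Kolmogorov backward equation ∂_t u(t,x) + (1/2) K(T-t)² ∂²_{xx} u(t,x) = 0; moreover u(T,x) = φ(x) for every x ∈ ℝ. -/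
open MeasureTheory ProbabilityTheory
open Real Filter Set
open scoped NNReal ENNReal Topology

set_option maxHeartbeats 1000000

lemma kbe_abs_pow_le (x : ℝ) (m : ℕ) : |x| ^ m ≤ 1 + x ^ (2 * m) := by
  have hx2 : x ^ (2 * m) = |x| ^ (2 * m) := ((even_two_mul m).pow_abs x).symm
  rcases le_total (|x| : ℝ) 1 with h | h
  · have h1 := pow_le_one₀ (abs_nonneg x) h (n := m)
    have h2 : (0:ℝ) ≤ |x| ^ (2 * m) := pow_nonneg (abs_nonneg x) _
    rw [hx2]; linarith
  · have h1' : |x| ^ m ≤ |x| ^ (2 * m) := pow_le_pow_right₀ h (by omega)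
    rw [hx2]; linarith

lemma kbe_aux_int_pow_exp {b : ℝ} (hb : 0 < b) (m : ℕ) :
    Integrable (fun x : ℝ => |x| ^ m * rexp (-b * x ^ 2)) := by
  have h1 : Integrable (fun x : ℝ => x ^ (2 * m) * rexp (-b * x ^ 2)) := by
    have := integrable_rpow_mul_exp_neg_mul_sq hb (s := ((2 * m : ℕ) : ℝ))
      (lt_of_lt_of_le (by norm_num) (Nat.cast_nonneg _))
    simpa only [Real.rpow_natCast] using this
  have h2 : Integrable (fun x : ℝ => rexp (-b * x ^ 2) + x ^ (2 * m) * rexp (-b * x ^ 2)) :=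
    (integrable_exp_neg_mul_sq hb).add h1
  refine h2.mono' ?_ ?_
  · exact ((continuous_abs.pow m).mul
      (Continuous.rexp (by continuity))).aestronglyMeasurable
  · refine Filter.Eventually.of_forall fun x => ?_
    have hx := kbe_abs_pow_le x m
    have hexp : (0:ℝ) < rexp (-b * x ^ 2) := exp_pos _
    have hn : ‖|x| ^ m * rexp (-b * x ^ 2)‖ = |x| ^ m * rexp (-b * x ^ 2) := by
      rw [Real.norm_eq_abs, abs_of_nonneg (by positivity)]
    rw [hn]
    nlinarith [pow_nonneg (abs_nonneg x) m]
-- conversion of integrals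
lemma kbe_integral_gaussianReal {V : ℝ≥0} (hV : V ≠ 0) (g : ℝ → ℝ) :
    ∫ z, g z ∂(gaussianReal 0 V) = ∫ z, gaussianPDFReal 0 V z * g z := by
  rw [gaussianReal_of_var_ne_zero 0 hV]
  have hmeas : Measurable fun z => Real.toNNReal (gaussianPDFReal 0 V z) :=
    (measurable_gaussianPDFReal 0 V).real_toNNReal
  have hd : (gaussianPDF 0 V) = fun z => ((Real.toNNReal (gaussianPDFReal 0 V z) : ℝ≥0) : ℝ≥0∞) := rfl
  rw [hd, integral_withDensity_eq_integral_smul hmeas]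
  congr 1
  ext z
  rw [NNReal.smul_def, Real.coe_toNNReal _ (gaussianPDFReal_nonneg 0 V z), smul_eq_mul]

lemma kbe_integrable_gaussian_iff {V : ℝ≥0} (hV : V ≠ 0) (g : ℝ → ℝ) :
    Integrable g (gaussianReal 0 V) ↔
      Integrable (fun z => gaussianPDFReal 0 V z * g z) volume := by
  rw [gaussianReal_of_var_ne_zero 0 hV]
  have hmeas : Measurable fun z => Real.toNNReal (gaussianPDFReal 0 V z) :=
    (measurable_gaussianPDFReal 0 V).real_toNNReal
  have hd : (gaussianPDF 0 V) = fun z => ((Real.toNNReal (gaussianPDFReal 0 V z) : ℝ≥0) : ℝ≥0∞) := rfl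
  rw [hd, integrable_withDensity_iff_integrable_smul hmeas]
  constructor <;> intro h <;> refine h.congr (Filter.Eventually.of_forall fun z => ?_) <;>
    simp only [NNReal.smul_def, Real.coe_toNNReal _ (gaussianPDFReal_nonneg 0 V z), smul_eq_mul]
lemma kbe_one_add_abs_pow (z : ℝ) (m : ℕ) : (1 + |z|) ^ m ≤ 2 ^ m * (1 + |z| ^ m) := by
  rcases le_total |z| 1 with h | h
  · have h1 : (1 + |z|) ^ m ≤ 2 ^ m := by
      refine pow_le_pow_left₀ (by positivity) (by linarith) m
    have h2 : (0:ℝ) ≤ |z| ^ m := pow_nonneg (abs_nonneg z) m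
    have h3 : (0:ℝ) < 2 ^ m := by positivity
    nlinarith
  · have h1 : (1 + |z|) ^ m ≤ (2 * |z|) ^ m := by
      refine pow_le_pow_left₀ (by positivity) (by linarith) m
    have h2 : ((2:ℝ) * |z|) ^ m = 2 ^ m * |z| ^ m := mul_pow 2 |z| m
    have h3 : (0:ℝ) < 2 ^ m := by positivity
    nlinarith

lemma kbe_pdf_eq {V : ℝ≥0} (z : ℝ) :
    gaussianPDFReal 0 V z = (Real.sqrt (2 * π * V))⁻¹ * rexp (-((2:ℝ) * V)⁻¹ * z ^ 2) := by
  rw [gaussianPDFReal]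
  congr 1
  ring

lemma kbe_integrable_poly {V : ℝ≥0} (hV : V ≠ 0) {p : ℝ → ℝ}
    (hm : AEStronglyMeasurable p (gaussianReal 0 V)) (c : ℝ) (m : ℕ)
    (hp : ∀ z, |p z| ≤ c * (1 + |z|) ^ m) :
    Integrable p (gaussianReal 0 V) := by
  have hVpos : (0:ℝ) < (V:ℝ) := by
    have := hV
    positivity
  set b : ℝ := ((2:ℝ) * V)⁻¹ with hbdef
  have hb : 0 < b := by positivity
  have hint : Integrable (fun z => c * (1 + |z|) ^ m) (gaussianReal 0 V) := by
    rw [kbe_integrable_gaussian_iff hV]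
    have hbig : Integrable (fun z : ℝ =>
        (Real.sqrt (2 * π * V))⁻¹ * (|c| * 2 ^ m) *
          (rexp (-b * z ^ 2) + |z| ^ m * rexp (-b * z ^ 2))) :=
      (((integrable_exp_neg_mul_sq hb).add (kbe_aux_int_pow_exp hb m)).const_mul _)
    refine hbig.mono' ?_ (Filter.Eventually.of_forall fun z => ?_)
    · refine ((measurable_gaussianPDFReal 0 V).mul ?_).aestronglyMeasurable
      fun_prop
    · have hpdf := kbe_pdf_eq (V := V) z
      have hs : (0:ℝ) < Real.sqrt (2 * π * V) := by
        refine Real.sqrt_pos.mpr (by positivity)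
      have he : (0:ℝ) < rexp (-b * z ^ 2) := exp_pos _
      have hz : (0:ℝ) ≤ |z| ^ m := pow_nonneg (abs_nonneg z) m
      have h1 : (1 + |z|) ^ m ≤ 2 ^ m * (1 + |z| ^ m) := kbe_one_add_abs_pow z m
      have hnorm : ‖gaussianPDFReal 0 V z * (c * (1 + |z|) ^ m)‖ =
          gaussianPDFReal 0 V z * (|c| * (1 + |z|) ^ m) := by
        rw [Real.norm_eq_abs, abs_mul, abs_of_nonneg (gaussianPDFReal_nonneg 0 V z), abs_mul,
          abs_of_nonneg (by positivity : (0:ℝ) ≤ (1 + |z|) ^ m)]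
      rw [hnorm, hpdf]
      calc (Real.sqrt (2 * π * V))⁻¹ * rexp (-b * z ^ 2) * (|c| * (1 + |z|) ^ m)
          = ((Real.sqrt (2 * π * V))⁻¹ * |c| * rexp (-b * z ^ 2)) * (1 + |z|) ^ m := by ring
        _ ≤ ((Real.sqrt (2 * π * V))⁻¹ * |c| * rexp (-b * z ^ 2)) * (2 ^ m * (1 + |z| ^ m)) :=
            mul_le_mul_of_nonneg_left h1 (by positivity)
        _ = (Real.sqrt (2 * π * V))⁻¹ * (|c| * 2 ^ m) *
              (rexp (-b * z ^ 2) + |z| ^ m * rexp (-b * z ^ 2)) := by ring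
  refine hint.mono' hm (Filter.Eventually.of_forall fun z => ?_)
  rw [Real.norm_eq_abs]
  exact hp z
lemma kbe_int_poly_exp (c : ℝ) (m : ℕ) :
    Integrable (fun z : ℝ => c * (1 + |z|) ^ m * rexp (-(1/2 : ℝ) * z ^ 2)) := by
  have h : Integrable (fun z : ℝ => (|c| * 2 ^ m) *
      (rexp (-(1/2:ℝ) * z ^ 2) + |z| ^ m * rexp (-(1/2:ℝ) * z ^ 2))) :=
    (((integrable_exp_neg_mul_sq (by norm_num : (0:ℝ) < 1/2)).add
      (kbe_aux_int_pow_exp (by norm_num) m)).const_mul _)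
  refine h.mono' ?_ (Eventually.of_forall fun z => ?_)
  · apply Continuous.aestronglyMeasurable
    have : Continuous fun z : ℝ => rexp (-(1/2:ℝ) * z ^ 2) := by continuity
    exact ((continuous_const.mul ((continuous_const.add continuous_abs).pow m)).mul this)
  · have he : (0:ℝ) < rexp (-(1/2:ℝ) * z ^ 2) := exp_pos _
    have h1 := kbe_one_add_abs_pow z m
    have hnorm : ‖c * (1 + |z|) ^ m * rexp (-(1/2:ℝ) * z ^ 2)‖ =
        |c| * (1 + |z|) ^ m * rexp (-(1/2:ℝ) * z ^ 2) := by
      rw [Real.norm_eq_abs, abs_mul, abs_mul, abs_of_nonneg he.le,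
        abs_of_nonneg (by positivity : (0:ℝ) ≤ (1 + |z|) ^ m)]
    rw [hnorm]
    calc |c| * (1 + |z|) ^ m * rexp (-(1/2:ℝ) * z ^ 2)
        = (|c| * rexp (-(1/2:ℝ) * z ^ 2)) * (1 + |z|) ^ m := by ring
      _ ≤ (|c| * rexp (-(1/2:ℝ) * z ^ 2)) * (2 ^ m * (1 + |z| ^ m)) :=
          mul_le_mul_of_nonneg_left h1 (by positivity)
      _ = (|c| * 2 ^ m) * (rexp (-(1/2:ℝ) * z ^ 2) + |z| ^ m * rexp (-(1/2:ℝ) * z ^ 2)) := by ring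

lemma kbe_tendsto_poly_gauss_atTop (c : ℝ) (m : ℕ) :
    Tendsto (fun z : ℝ => c * (1 + |z|) ^ m * rexp (-(1/2:ℝ) * z ^ 2)) atTop (𝓝 0) := by
  have hexp : Tendsto (fun x : ℝ => rexp (-(1/2) * x)) atTop (𝓝 0) := by
    rw [tendsto_exp_comp_nhds_zero]
    have : Tendsto (fun x : ℝ => (1/2 : ℝ) * x) atTop atTop :=
      Tendsto.const_mul_atTop (by norm_num) tendsto_id
    have h2 := tendsto_neg_atTop_atBot.comp this
    refine h2.congr fun x => ?_
    simp [Function.comp_def]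
    try ring
  have hO : Tendsto (fun x : ℝ => x ^ (m : ℝ) * rexp (-(1/2:ℝ) * x ^ 2)) atTop (𝓝 0) :=
    ((rpow_mul_exp_neg_mul_sq_isLittleO_exp_neg (by norm_num : (0:ℝ) < 1/2) (m : ℝ)).isBigO).trans_tendsto hexp
  have hO2 : Tendsto (fun x : ℝ => (|c| * 2 ^ m) * (x ^ (m : ℝ) * rexp (-(1/2:ℝ) * x ^ 2)))
      atTop (𝓝 0) := by simpa using hO.const_mul (|c| * 2 ^ m)
  refine squeeze_zero_norm' ?_ hO2
  filter_upwards [eventually_ge_atTop (1:ℝ)] with z hz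
  have hz0 : (0:ℝ) ≤ z := by linarith
  have habs : |z| = z := abs_of_nonneg hz0
  have he : (0:ℝ) < rexp (-(1/2:ℝ) * z ^ 2) := exp_pos _
  have h1 : (1 + |z|) ^ m ≤ (2 * z) ^ m := by
    refine pow_le_pow_left₀ (by positivity) (by rw [habs]; linarith) m
  have hrw : z ^ (m : ℝ) = z ^ m := Real.rpow_natCast z m
  have hnorm : ‖c * (1 + |z|) ^ m * rexp (-(1/2:ℝ) * z ^ 2)‖ =
      |c| * (1 + |z|) ^ m * rexp (-(1/2:ℝ) * z ^ 2) := by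
    rw [Real.norm_eq_abs, abs_mul, abs_mul, abs_of_nonneg he.le,
      abs_of_nonneg (by positivity : (0:ℝ) ≤ (1 + |z|) ^ m)]
  rw [hnorm, hrw]
  calc |c| * (1 + |z|) ^ m * rexp (-(1/2:ℝ) * z ^ 2)
      ≤ |c| * ((2 * z) ^ m) * rexp (-(1/2:ℝ) * z ^ 2) := by
        have := mul_le_mul_of_nonneg_left h1 (abs_nonneg c)
        nlinarith
    _ = (|c| * 2 ^ m) * (z ^ m * rexp (-(1/2:ℝ) * z ^ 2)) := by rw [mul_pow]; ring

lemma kbe_tendsto_poly_gauss_atBot (c : ℝ) (m : ℕ) :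
    Tendsto (fun z : ℝ => c * (1 + |z|) ^ m * rexp (-(1/2:ℝ) * z ^ 2)) atBot (𝓝 0) := by
  have h := (kbe_tendsto_poly_gauss_atTop c m).comp tendsto_neg_atBot_atTop
  refine h.congr fun z => ?_
  simp [Function.comp, abs_neg, neg_sq]
lemma kbe_pdf_one (z : ℝ) :
    gaussianPDFReal 0 1 z = (Real.sqrt (2 * π))⁻¹ * rexp (-(1/2:ℝ) * z ^ 2) := by
  rw [kbe_pdf_eq]
  norm_num

lemma kbe_ibp (ψ ψd : ℝ → ℝ) (hd : ∀ z, HasDerivAt ψ (ψd z) z) (hcont : Continuous ψd)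
    (B : ℝ) (hB : 0 ≤ B) (m : ℕ)
    (hψ : ∀ z, |ψ z| ≤ B * (1 + |z|) ^ m) (hψd : ∀ z, |ψd z| ≤ B * (1 + |z|) ^ m) :
    ∫ z, z * ψ z ∂(gaussianReal 0 1) = ∫ z, ψd z ∂(gaussianReal 0 1) := by
  set c0 : ℝ := (Real.sqrt (2 * π))⁻¹ with hc0
  have hc0pos : 0 < c0 := by
    rw [hc0]
    have : (0:ℝ) < Real.sqrt (2 * π) := Real.sqrt_pos.mpr (by positivity)
    positivity
  have hψc : Continuous ψ := by
    rw [continuous_iff_continuousAt]; exact fun z => (hd z).continuousAt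
  set E : ℝ → ℝ := fun z => rexp (-(1/2:ℝ) * z ^ 2) with hE
  have hEc : Continuous E := by rw [hE]; continuity
  have hEpos : ∀ z, 0 < E z := fun z => exp_pos _
  have hEd : ∀ z, HasDerivAt E (E z * (-z)) z := by
    intro z
    have h1 : HasDerivAt (fun z : ℝ => -(1/2:ℝ) * z ^ 2) (-(1/2:ℝ) * (2 * z ^ 1)) z :=
      (hasDerivAt_pow 2 z).const_mul (-(1/2:ℝ))
    have h2 := h1.exp
    convert h2 using 1
    ring
  set G : ℝ → ℝ := fun z => c0 * E z * ψ z with hG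
  set Gd : ℝ → ℝ := fun z => c0 * E z * (ψd z - z * ψ z) with hGd
  have hGderiv : ∀ z, HasDerivAt G (Gd z) z := by
    intro z
    have h1 : HasDerivAt (fun z => c0 * E z) (c0 * (E z * (-z))) z := (hEd z).const_mul c0
    have h2 : HasDerivAt (fun y => c0 * E y * ψ y) (c0 * (E z * -z) * ψ z + c0 * E z * ψd z) z :=
      h1.mul (hd z)
    convert h2 using 1
    simp only [hGd]
    ring
  have hGdcont : Continuous Gd := by
    exact (continuous_const.mul hEc).mul (hcont.sub (continuous_id.mul hψc))
  -- integrability of Gd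
  have hGdbound : ∀ z, ‖Gd z‖ ≤ (2 * B * c0) * (1 + |z|) ^ (m + 1) * E z := by
    intro z
    have hE0 := (hEpos z).le
    have h1 : |Gd z| = c0 * E z * |ψd z - z * ψ z| := by
      simp only [hGd, abs_mul, abs_of_nonneg hE0, abs_of_nonneg hc0pos.le]
    have h2 : |ψd z - z * ψ z| ≤ |ψd z| + |z| * |ψ z| := by
      calc |ψd z - z * ψ z| ≤ |ψd z| + |z * ψ z| := abs_sub _ _
        _ = |ψd z| + |z| * |ψ z| := by rw [abs_mul]
    have h3 : |ψd z| + |z| * |ψ z| ≤ 2 * B * (1 + |z|) ^ (m + 1) := by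
      have hb1 : (1:ℝ) ≤ 1 + |z| := by simp [abs_nonneg]
      have hp1 : (1 + |z|) ^ m ≤ (1 + |z|) ^ (m + 1) := by
        refine pow_le_pow_right₀ hb1 (by omega)
      have hz1 : |z| * |ψ z| ≤ |z| * (B * (1 + |z|) ^ m) :=
        mul_le_mul_of_nonneg_left (hψ z) (abs_nonneg z)
      have hz2 : |z| * (B * (1 + |z|) ^ m) ≤ (1 + |z|) * (B * (1 + |z|) ^ m) := by
        refine mul_le_mul_of_nonneg_right (by linarith [abs_nonneg z]) (by positivity)
      have hz3 : (1 + |z|) * (B * (1 + |z|) ^ m) = B * (1 + |z|) ^ (m + 1) := by ring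
      have h4 := hψd z
      nlinarith [pow_nonneg (by positivity : (0:ℝ) ≤ 1 + |z|) m,
        pow_nonneg (by positivity : (0:ℝ) ≤ 1 + |z|) (m+1)]
    rw [Real.norm_eq_abs, h1]
    calc c0 * E z * |ψd z - z * ψ z| ≤ c0 * E z * (2 * B * (1 + |z|) ^ (m + 1)) := by
          refine mul_le_mul_of_nonneg_left (h2.trans h3) (by positivity)
      _ = (2 * B * c0) * (1 + |z|) ^ (m + 1) * E z := by ring
  have hGdint : Integrable Gd := by
    refine (kbe_int_poly_exp (2 * B * c0) (m + 1)).mono' hGdcont.aestronglyMeasurable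
      (Eventually.of_forall fun z => ?_)
    exact hGdbound z
  -- limits of G
  have hGbound : ∀ z, ‖G z‖ ≤ (c0 * B) * (1 + |z|) ^ m * E z := by
    intro z
    have hE0 := (hEpos z).le
    have h1 : |G z| = c0 * E z * |ψ z| := by
      simp only [hG, abs_mul, abs_of_nonneg hE0, abs_of_nonneg hc0pos.le]
    rw [Real.norm_eq_abs, h1]
    calc c0 * E z * |ψ z| ≤ c0 * E z * (B * (1 + |z|) ^ m) :=
          mul_le_mul_of_nonneg_left (hψ z) (by positivity)
      _ = (c0 * B) * (1 + |z|) ^ m * E z := by ring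
  have hGtop : Tendsto G atTop (𝓝 0) :=
    squeeze_zero_norm hGbound (kbe_tendsto_poly_gauss_atTop (c0 * B) m)
  have hGbot : Tendsto G atBot (𝓝 0) :=
    squeeze_zero_norm hGbound (kbe_tendsto_poly_gauss_atBot (c0 * B) m)
  -- total integral of Gd is zero
  have hIoi : ∫ z in Ioi (0:ℝ), Gd z = 0 - G 0 :=
    integral_Ioi_of_hasDerivAt_of_tendsto
      ((hGderiv 0).continuousAt.continuousWithinAt)
      (fun z _ => hGderiv z) hGdint.integrableOn hGtop
  have hIic : ∫ z in Iic (0:ℝ), Gd z = G 0 - 0 :=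
    integral_Iic_of_hasDerivAt_of_tendsto
      ((hGderiv 0).continuousAt.continuousWithinAt)
      (fun z _ => hGderiv z) hGdint.integrableOn hGbot
  have htotal : ∫ z, Gd z = 0 := by
    rw [← intervalIntegral.integral_Iic_add_Ioi hGdint.integrableOn hGdint.integrableOn, hIoi, hIic]
    ring
  -- split
  have hint1 : Integrable (fun z => gaussianPDFReal 0 1 z * ψd z) := by
    refine (kbe_int_poly_exp (c0 * B) m).mono' ?_ (Eventually.of_forall fun z => ?_)
    · exact ((measurable_gaussianPDFReal 0 1).mul hcont.measurable).aestronglyMeasurable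
    · rw [Real.norm_eq_abs, kbe_pdf_one, abs_mul, abs_mul,
        abs_of_nonneg (exp_pos _).le, abs_of_nonneg (by positivity : (0:ℝ) ≤ c0)]
      calc c0 * rexp (-(1/2:ℝ) * z ^ 2) * |ψd z|
          ≤ c0 * rexp (-(1/2:ℝ) * z ^ 2) * (B * (1 + |z|) ^ m) :=
            mul_le_mul_of_nonneg_left (hψd z) (by positivity)
        _ = (c0 * B) * (1 + |z|) ^ m * rexp (-(1/2:ℝ) * z ^ 2) := by ring
  have hint2 : Integrable (fun z => gaussianPDFReal 0 1 z * (z * ψ z)) := by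
    have heq : (fun z => gaussianPDFReal 0 1 z * (z * ψ z)) =
        fun z => (fun z => gaussianPDFReal 0 1 z * ψd z) z - Gd z := by
      funext z
      simp only [kbe_pdf_one, hGd, hE]
      ring
    rw [heq]
    exact hint1.sub hGdint
  have hsplit : (∫ z, gaussianPDFReal 0 1 z * ψd z) -
      (∫ z, gaussianPDFReal 0 1 z * (z * ψ z)) = 0 := by
    rw [← integral_sub hint1 hint2]
    have hfun : (fun z => gaussianPDFReal 0 1 z * ψd z - gaussianPDFReal 0 1 z * (z * ψ z)) = Gd := by
      funext z
      simp only [kbe_pdf_one, hGd, hE]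
      ring
    rw [hfun, htotal]
  rw [kbe_integral_gaussianReal one_ne_zero, kbe_integral_gaussianReal one_ne_zero]
  linarith
lemma kbe_shift_bound {B : ℝ} (hB : 0 ≤ B) {m : ℕ} {f : ℝ → ℝ}
    (hbf : ∀ y, |f y| ≤ B * (1 + |y|) ^ m) (x z w : ℝ) (hw : |w| ≤ |x| + 1) :
    |f (w + z)| ≤ B * (2 + |x|) ^ m * (1 + |z|) ^ m := by
  have h1 : 1 + |w + z| ≤ (2 + |x|) * (1 + |z|) := by
    have h2 : |w + z| ≤ |w| + |z| := abs_add_le w z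
    nlinarith [abs_nonneg z, abs_nonneg x, abs_nonneg w]
  have h3 : (1 + |w + z|) ^ m ≤ ((2 + |x|) * (1 + |z|)) ^ m :=
    pow_le_pow_left₀ (by positivity) h1 m
  calc |f (w + z)| ≤ B * (1 + |w + z|) ^ m := hbf _
    _ ≤ B * ((2 + |x|) * (1 + |z|)) ^ m := mul_le_mul_of_nonneg_left h3 hB
    _ = B * (2 + |x|) ^ m * (1 + |z|) ^ m := by rw [mul_pow]; ring

lemma kbe_hasDerivAt_space {V : ℝ≥0} (hV : V ≠ 0) (f fd : ℝ → ℝ)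
    (hd : ∀ y, HasDerivAt f (fd y) y) (hfd : Continuous fd)
    (B : ℝ) (hB : 0 ≤ B) (m : ℕ)
    (hbf : ∀ y, |f y| ≤ B * (1 + |y|) ^ m) (hbfd : ∀ y, |fd y| ≤ B * (1 + |y|) ^ m)
    (x : ℝ) :
    HasDerivAt (fun y => ∫ z, f (y + z) ∂(gaussianReal 0 V))
      (∫ z, fd (x + z) ∂(gaussianReal 0 V)) x := by
  have hfc : Continuous f := by
    rw [continuous_iff_continuousAt]; exact fun z => (hd z).continuousAt
  have h := hasDerivAt_integral_of_dominated_loc_of_deriv_le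
    (F := fun y z => f (y + z)) (F' := fun y z => fd (y + z))
    (μ := gaussianReal 0 V) (x₀ := x)
    (bound := fun z => B * (2 + |x|) ^ m * (1 + |z|) ^ m)
    (s := Metric.ball x 1) (Metric.ball_mem_nhds x one_pos)
    (Eventually.of_forall fun y =>
      (hfc.comp (continuous_const.add continuous_id)).aestronglyMeasurable)
    ?_ ((hfd.comp (continuous_const.add continuous_id)).aestronglyMeasurable) ?_ ?_ ?_
  · exact h.2
  · refine kbe_integrable_poly hV
      ((hfc.comp (continuous_const.add continuous_id)).aestronglyMeasurable)
      (B * (2 + |x|) ^ m) m (fun z => ?_)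
    exact kbe_shift_bound hB hbf x z x (by linarith [abs_nonneg x])
  · refine Eventually.of_forall fun z => fun y hy => ?_
    rw [Real.norm_eq_abs]
    refine kbe_shift_bound hB hbfd x z y ?_
    have : |y - x| < 1 := by
      rw [Metric.mem_ball, Real.dist_eq] at hy
      exact hy
    calc |y| = |x + (y - x)| := by ring_nf
      _ ≤ |x| + |y - x| := abs_add_le _ _
      _ ≤ |x| + 1 := by linarith
  · refine kbe_integrable_poly hV ?_ (B * (2 + |x|) ^ m) m (fun z => ?_)
    · exact (continuous_const.mul ((continuous_const.add continuous_abs).pow m)).aestronglyMeasurable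
    · have h1 : (0:ℝ) ≤ B * (2 + |x|) ^ m * (1 + |z|) ^ m := by positivity
      rw [abs_of_nonneg h1]
  · refine Eventually.of_forall fun z => fun y _ => ?_
    have h1 : HasDerivAt (fun y : ℝ => y + z) 1 y := (hasDerivAt_id y).add_const z
    have := (hd (y + z)).comp y h1
    rw [mul_one] at this
    exact this

lemma kbe_subst {w : ℝ} (hw : 0 < w) (g : ℝ → ℝ) (hg : Continuous g) :
    ∫ z, g z ∂(gaussianReal 0 w.toNNReal)
      = ∫ z, g (Real.sqrt w * z) ∂(gaussianReal 0 1) := by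
  have hmap := gaussianReal_map_const_mul (μ := 0) (v := 1) (Real.sqrt w)
  have hvar : (.mk ((Real.sqrt w) ^ 2) (sq_nonneg _) : ℝ≥0) * 1 = w.toNNReal := by
    ext
    simp [Real.sq_sqrt hw.le, Real.coe_toNNReal _ hw.le]
  have hzero : Real.sqrt w * (0:ℝ) = 0 := mul_zero _
  rw [hzero, hvar] at hmap
  rw [← hmap]
  exact integral_map (measurable_const_mul _).aemeasurable hg.aestronglyMeasurable
lemma kbe_scaled_bound {B : ℝ} (hB : 0 ≤ B) {m : ℕ} {g : ℝ → ℝ}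
    (hbg : ∀ y, |g y| ≤ B * (1 + |y|) ^ m) (x : ℝ) {r R : ℝ} (z : ℝ)
    (hr0 : 0 ≤ r) (hrR : r ≤ R) :
    |g (x + r * z)| ≤ B * (1 + |x| + R) ^ m * (1 + |z|) ^ m := by
  have hR : 0 ≤ R := le_trans hr0 hrR
  have h1 : 1 + |x + r * z| ≤ (1 + |x| + R) * (1 + |z|) := by
    have h2 : |x + r * z| ≤ |x| + r * |z| := by
      calc |x + r * z| ≤ |x| + |r * z| := abs_add_le _ _
        _ = |x| + r * |z| := by rw [abs_mul, abs_of_nonneg hr0]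
    nlinarith [abs_nonneg x, abs_nonneg z, mul_le_mul_of_nonneg_right hrR (abs_nonneg z)]
  have h3 : (1 + |x + r * z|) ^ m ≤ ((1 + |x| + R) * (1 + |z|)) ^ m :=
    pow_le_pow_left₀ (by positivity) h1 m
  calc |g (x + r * z)| ≤ B * (1 + |x + r * z|) ^ m := hbg _
    _ ≤ B * ((1 + |x| + R) * (1 + |z|)) ^ m := mul_le_mul_of_nonneg_left h3 hB
    _ = B * (1 + |x| + R) ^ m * (1 + |z|) ^ m := by rw [mul_pow]; ring

/-- Kolmogorov backward equation for the Gaussian Volterra marginal: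
with `v(t) = ∫_t^T K(T-s)² ds` and `u(t,x) = ∫ φ(x+z) dγ_{v(t)}(z)`, for every `t ∈ (0,T)`
and `x ∈ ℝ` the time derivative `∂_t u(t,x)` exists, the second space derivative
`∂²_{xx} u(t,x)` exists and equals `∫ φ''(x+z) dγ_{v(t)}(z)`, and
`∂_t u + (1/2) K(T-t)² ∂²_{xx} u = 0`; moreover `u(T,·) = φ`. -/
theorem kolmogorov_backward_equation_gaussian_volterra
    (T : ℝ) (hT : 0 < T)
    (K : ℝ → ℝ) (hKcont : ContinuousOn K (Set.Icc 0 T))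
    (hKpos : ∀ s ∈ Set.Ioc (0 : ℝ) T, 0 < K s)
    (φ : ℝ → ℝ) (hφ : ContDiff ℝ 2 φ)
    (C : ℝ) (hC : 0 ≤ C) (κ : ℕ)
    (h0 : ∀ x : ℝ, |φ x| ≤ C * (1 + |x| ^ κ))
    (h1 : ∀ x : ℝ, |deriv φ x| ≤ C * (1 + |x| ^ κ))
    (h2 : ∀ x : ℝ, |deriv (deriv φ) x| ≤ C * (1 + |x| ^ κ))
    (v : ℝ → ℝ) (hv : ∀ t : ℝ, v t = ∫ s in Set.Ioc t T, K (T - s) ^ 2)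
    (u : ℝ → ℝ → ℝ)
    (hu : ∀ t x : ℝ, u t x = ∫ z, φ (x + z) ∂(gaussianReal 0 (v t).toNNReal)) :
    (∀ x : ℝ, u T x = φ x) ∧
      ∀ t ∈ Set.Ioo (0 : ℝ) T, ∀ x : ℝ,
        DifferentiableAt ℝ (fun s => u s x) t ∧
        HasDerivAt (fun y => deriv (fun y' => u t y') y)
          (∫ z, deriv (deriv φ) (x + z) ∂(gaussianReal 0 (v t).toNNReal)) x ∧
        deriv (fun s => u s x) t +
            (1 / 2) * K (T - t) ^ 2 *
              ∫ z, deriv (deriv φ) (x + z) ∂(gaussianReal 0 (v t).toNNReal) = 0 := by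
  have hφ2 : ContDiff ℝ ((1:ℕ) + 1) φ := by exact_mod_cast hφ
  have hφ1 : ContDiff ℝ 1 (deriv φ) := (contDiff_succ_iff_deriv.mp hφ2).2.2
  have hdφ : ∀ y, HasDerivAt φ (deriv φ y) y := fun y =>
    ((hφ.differentiable (by norm_num)) y).hasDerivAt
  have hdφ' : ∀ y, HasDerivAt (deriv φ) (deriv (deriv φ) y) y := fun y =>
    ((hφ1.differentiable one_ne_zero) y).hasDerivAt
  have hφ'c : Continuous (deriv φ) := hφ1.continuous
  have hφ''c : Continuous (deriv (deriv φ)) := hφ1.continuous_deriv le_rfl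
  have hconv : ∀ g : ℝ → ℝ, (∀ y, |g y| ≤ C * (1 + |y| ^ κ)) →
      ∀ y, |g y| ≤ (2 * C) * (1 + |y|) ^ κ := by
    intro g hg y
    have hb1 : (1:ℝ) ≤ 1 + |y| := by simp [abs_nonneg]
    have e1 : (1:ℝ) ≤ (1 + |y|) ^ κ := one_le_pow₀ hb1
    have e2 : |y| ^ κ ≤ (1 + |y|) ^ κ :=
      pow_le_pow_left₀ (abs_nonneg y) (by linarith) κ
    calc |g y| ≤ C * (1 + |y| ^ κ) := hg y
      _ ≤ (2 * C) * (1 + |y|) ^ κ := by nlinarith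
  have hb0 := hconv φ h0
  have hb1 := hconv (deriv φ) h1
  have hb2 := hconv (deriv (deriv φ)) h2
  have h2C : (0:ℝ) ≤ 2 * C := by linarith
  constructor
  · intro x
    have hvT : v T = 0 := by
      rw [hv T, Set.Ioc_self, Measure.restrict_empty, integral_zero_measure]
    rw [hu T x, hvT, Real.toNNReal_zero, gaussianReal_zero_var, integral_dirac]
    norm_num
  · intro t ht x
    obtain ⟨ht0, htT⟩ := ht
    set f : ℝ → ℝ := fun r => K (T - r) ^ 2 with hf
    have hfc : ContinuousOn f (Icc 0 T) := by
      have hmaps : MapsTo (fun r : ℝ => T - r) (Icc 0 T) (Icc 0 T) := by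
        intro r hr
        constructor
        · simp only [mem_Icc] at hr ⊢
          linarith [hr.2]
        · simp only [mem_Icc] at hr ⊢
          linarith [hr.1]
      exact ((hKcont.comp ((continuous_const.sub continuous_id).continuousOn) hmaps).pow 2)
    have hvId : ∀ s : ℝ, s ≤ T → v s = ∫ r in s..T, f r := by
      intro s hs
      rw [hv s, intervalIntegral.integral_of_le hs]
    have hii : ∀ s ∈ Ioo (0:ℝ) T, IntervalIntegrable f volume s T := by
      intro s hs
      refine (hfc.mono ?_).intervalIntegrable
      rw [Set.uIcc_of_le hs.2.le]
      exact Icc_subset_Icc hs.1.le le_rfl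
    have hvderiv : ∀ s ∈ Ioo (0:ℝ) T, HasDerivAt v (-(f s)) s := by
      intro s hs
      have hca : ContinuousAt f s := hfc.continuousAt (Icc_mem_nhds hs.1 hs.2)
      have hsm : StronglyMeasurableAtFilter f (𝓝 s) := by
        refine AEStronglyMeasurable.stronglyMeasurableAtFilter_of_mem ?_
          (Ioo_mem_nhds hs.1 hs.2)
        exact ((hfc.mono Ioo_subset_Icc_self).aestronglyMeasurable measurableSet_Ioo)
      have hF := intervalIntegral.integral_hasDerivAt_left (hii s hs) hsm hca
      refine hF.congr_of_eventuallyEq ?_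
      filter_upwards [Ioo_mem_nhds hs.1 hs.2] with r hr
      exact hvId r hr.2.le
    have hvpos : ∀ s ∈ Ioo (0:ℝ) T, 0 < v s := by
      intro s hs
      rw [hvId s hs.2.le]
      refine intervalIntegral.intervalIntegral_pos_of_pos_on (hii s hs) ?_ hs.2
      intro r hr
      have : 0 < K (T - r) := hKpos (T - r) ⟨by linarith [hr.2], by linarith [hr.1, hs.1]⟩
      positivity
    set ε : ℝ := min t (T - t) / 2 with hε
    have hεpos : 0 < ε := by
      have : (0:ℝ) < min t (T - t) := lt_min ht0 (by linarith)
      rw [hε]; linarith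
    set J : Set ℝ := Icc (t - ε) (t + ε) with hJ
    have htJ : t ∈ J := by
      rw [hJ, Set.mem_Icc]
      constructor <;> linarith
    have hJsub : J ⊆ Ioo 0 T := by
      intro s hs
      have ha1 : ε ≤ t / 2 := by
        rw [hε]; have := min_le_left t (T - t); linarith
      have ha2 : ε ≤ (T - t) / 2 := by
        rw [hε]; have := min_le_right t (T - t); linarith
      obtain ⟨hs1, hs2⟩ := hs
      constructor <;> linarith
    have hJIcc : J ⊆ Icc 0 T := fun s hs => ⟨(hJsub hs).1.le, (hJsub hs).2.le⟩
    have hvcont : ContinuousOn v J := fun s hs =>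
      ((hvderiv s (hJsub hs)).continuousAt).continuousWithinAt
    obtain ⟨s₁, hs₁J, hs₁min⟩ := isCompact_Icc.exists_isMinOn ⟨t, htJ⟩ hvcont
    obtain ⟨s₂, hs₂J, hs₂max⟩ := isCompact_Icc.exists_isMaxOn ⟨t, htJ⟩ hvcont
    obtain ⟨s₃, hs₃J, hs₃max⟩ := isCompact_Icc.exists_isMaxOn ⟨t, htJ⟩ (hfc.mono hJIcc)
    have ha : 0 < v s₁ := hvpos s₁ (hJsub hs₁J)
    have hsa : 0 < Real.sqrt (v s₁) := Real.sqrt_pos.mpr ha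
    have hf3 : 0 ≤ f s₃ := sq_nonneg _
    have hvt : 0 < v t := hvpos t ⟨ht0, htT⟩
    have hVne : ((v t).toNNReal) ≠ 0 := by
      simp only [ne_eq, Real.toNNReal_eq_zero, not_le]
      exact hvt
    set c : ℝ := Real.sqrt (v t) with hcdef
    have hc : 0 < c := Real.sqrt_pos.mpr hvt
    have hIsub : (∫ z, deriv (deriv φ) (x + z) ∂(gaussianReal 0 (v t).toNNReal))
        = ∫ z, deriv (deriv φ) (x + c * z) ∂(gaussianReal 0 1) := by
      rw [kbe_subst hvt (fun z => deriv (deriv φ) (x + z))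
        (hφ''c.comp (continuous_const.add continuous_id))]
    set I : ℝ := ∫ z, deriv (deriv φ) (x + z) ∂(gaussianReal 0 (v t).toNNReal) with hI
    set D : ℝ := (2 * C) * (1 + |x| + Real.sqrt (v s₂)) ^ κ *
        (f s₃ / (2 * Real.sqrt (v s₁)) + 1) with hD
    have hballJ : Metric.ball t ε ⊆ J := by
      intro s hs
      rw [Metric.mem_ball, Real.dist_eq] at hs
      have h1 := abs_lt.mp hs
      exact ⟨by linarith [h1.1], by linarith [h1.2]⟩
    have hsb : ∀ s ∈ J, 0 < v s ∧ Real.sqrt (v s₁) ≤ Real.sqrt (v s) ∧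
        Real.sqrt (v s) ≤ Real.sqrt (v s₂) ∧ f s ≤ f s₃ := by
      intro s hs
      exact ⟨hvpos s (hJsub hs), Real.sqrt_le_sqrt (hs₁min hs),
        Real.sqrt_le_sqrt (hs₂max hs), hs₃max hs⟩
    have hcs2 : c ≤ Real.sqrt (v s₂) := (hsb t htJ).2.2.1
    have hs2nn : 0 ≤ Real.sqrt (v s₂) := Real.sqrt_nonneg _
    -- dominated differentiation in time
    have hmeas1 : ∀ s : ℝ, AEStronglyMeasurable (fun z => φ (x + Real.sqrt (v s) * z))
        (gaussianReal 0 1) := fun s =>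
      (hφ.continuous.comp
        (continuous_const.add (continuous_const.mul continuous_id))).aestronglyMeasurable
    have hFint : Integrable (fun z => φ (x + Real.sqrt (v t) * z)) (gaussianReal 0 1) := by
      refine kbe_integrable_poly (p := fun z => φ (x + Real.sqrt (v t) * z)) one_ne_zero
        (hmeas1 t) ((2*C) * (1 + |x| + Real.sqrt (v s₂)) ^ κ) κ (fun z => ?_)
      exact kbe_scaled_bound h2C hb0 x z hc.le hcs2
    have hF'meas : AEStronglyMeasurable
        (fun z => deriv φ (x + Real.sqrt (v t) * z) *
          ((-(f t)) / (2 * Real.sqrt (v t)) * z)) (gaussianReal 0 1) :=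
      ((hφ'c.comp
          (continuous_const.add (continuous_const.mul continuous_id))).mul
          (continuous_const.mul continuous_id)).aestronglyMeasurable
    have hbnd : ∀ᵐ z ∂(gaussianReal 0 1), ∀ s ∈ Metric.ball t ε,
        ‖deriv φ (x + Real.sqrt (v s) * z) * ((-(f s)) / (2 * Real.sqrt (v s)) * z)‖ ≤
          D * (1 + |z|) ^ (κ + 1) := by
      refine Eventually.of_forall fun z => fun s hs => ?_
      have hsJ := hballJ hs
      obtain ⟨hvs, hle1, hle2, hle3⟩ := hsb s hsJ
      have hss : 0 < Real.sqrt (v s) := Real.sqrt_pos.mpr hvs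
      rw [Real.norm_eq_abs, abs_mul]
      have e1 : |deriv φ (x + Real.sqrt (v s) * z)| ≤
          (2*C) * (1 + |x| + Real.sqrt (v s₂)) ^ κ * (1 + |z|) ^ κ :=
        kbe_scaled_bound h2C hb1 x z hss.le hle2
      have e2 : |(-(f s)) / (2 * Real.sqrt (v s)) * z| ≤
          (f s₃ / (2 * Real.sqrt (v s₁)) + 1) * (1 + |z|) := by
        rw [abs_mul, abs_div, abs_neg, abs_of_nonneg (sq_nonneg (K (T - s))),
          abs_of_nonneg (by positivity : (0:ℝ) ≤ 2 * Real.sqrt (v s))]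
        have e3 : f s / (2 * Real.sqrt (v s)) ≤ f s₃ / (2 * Real.sqrt (v s₁)) := by
          apply div_le_div₀ (by positivity) hle3 (by positivity)
          linarith
        have e4 : |z| ≤ 1 + |z| := by linarith [abs_nonneg z]
        have e5 : (0:ℝ) ≤ f s / (2 * Real.sqrt (v s)) := by positivity
        nlinarith [abs_nonneg z, div_nonneg hf3 (by positivity : (0:ℝ) ≤ 2 * Real.sqrt (v s₁))]
      calc |deriv φ (x + Real.sqrt (v s) * z)| * |(-(f s)) / (2 * Real.sqrt (v s)) * z|
          ≤ ((2*C) * (1 + |x| + Real.sqrt (v s₂)) ^ κ * (1 + |z|) ^ κ) *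
            ((f s₃ / (2 * Real.sqrt (v s₁)) + 1) * (1 + |z|)) := by
            refine mul_le_mul e1 e2 (abs_nonneg _) (by positivity)
        _ = D * (1 + |z|) ^ (κ + 1) := by rw [hD, pow_succ]; ring
    have hbndint : Integrable (fun z => D * (1 + |z|) ^ (κ + 1)) (gaussianReal 0 1) := by
      refine kbe_integrable_poly one_ne_zero ?_ D (κ + 1) (fun z => ?_)
      · exact (continuous_const.mul
          ((continuous_const.add continuous_abs).pow (κ + 1))).aestronglyMeasurable
      · have hDpos : 0 ≤ D := by rw [hD, hf]; positivity
        rw [abs_of_nonneg (by positivity)]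
    have hdiff : ∀ᵐ z ∂(gaussianReal 0 1), ∀ s ∈ Metric.ball t ε,
        HasDerivAt (fun s => φ (x + Real.sqrt (v s) * z))
          (deriv φ (x + Real.sqrt (v s) * z) * ((-(f s)) / (2 * Real.sqrt (v s)) * z)) s := by
      refine Eventually.of_forall fun z => fun s hs => ?_
      have hsJ := hballJ hs
      have hvs : 0 < v s := hvpos s (hJsub hsJ)
      have hsq : HasDerivAt (fun s => Real.sqrt (v s)) ((-(f s)) / (2 * Real.sqrt (v s))) s :=
        (hvderiv s (hJsub hsJ)).sqrt (ne_of_gt hvs)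
      have hlin : HasDerivAt (fun s => x + Real.sqrt (v s) * z)
          ((-(f s)) / (2 * Real.sqrt (v s)) * z) s := (hsq.mul_const z).const_add x
      have := (hdφ (x + Real.sqrt (v s) * z)).comp s hlin
      exact this
    have hmain := hasDerivAt_integral_of_dominated_loc_of_deriv_le
      (F := fun s z => φ (x + Real.sqrt (v s) * z))
      (F' := fun s z => deriv φ (x + Real.sqrt (v s) * z) *
        ((-(f s)) / (2 * Real.sqrt (v s)) * z))
      (μ := gaussianReal 0 1) (x₀ := t)
      (bound := fun z => D * (1 + |z|) ^ (κ + 1))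
      (s := Metric.ball t ε) (Metric.ball_mem_nhds t hεpos)
      (Eventually.of_forall hmeas1) hFint hF'meas hbnd hbndint hdiff
    -- identify u with the parametrized integral near t
    have hueq : (fun s => u s x) =ᶠ[𝓝 t]
        (fun s => ∫ z, φ (x + Real.sqrt (v s) * z) ∂(gaussianReal 0 1)) := by
      filter_upwards [Metric.ball_mem_nhds t hεpos] with s hs
      rw [hu s x, kbe_subst (hvpos s (hJsub (hballJ hs))) (fun z => φ (x + z))
        (hφ.continuous.comp (continuous_const.add continuous_id))]
    have hDer : HasDerivAt (fun s => u s x)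
        (∫ z, deriv φ (x + Real.sqrt (v t) * z) *
          ((-(f t)) / (2 * Real.sqrt (v t)) * z) ∂(gaussianReal 0 1)) t :=
      hmain.2.congr_of_eventuallyEq hueq
    -- compute the derivative value via integration by parts
    set ψ : ℝ → ℝ := fun z => deriv φ (x + c * z) with hψ
    set ψd : ℝ → ℝ := fun z => deriv (deriv φ) (x + c * z) * c with hψd
    have hψder : ∀ z, HasDerivAt ψ (ψd z) z := by
      intro z
      have hlin : HasDerivAt (fun z : ℝ => x + c * z) c z := by
        simpa using ((hasDerivAt_id z).const_mul c).const_add x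
      have := (hdφ' (x + c * z)).comp z hlin
      exact this
    have hψdc : Continuous ψd :=
      (hφ''c.comp (continuous_const.add (continuous_const.mul continuous_id))).mul
        continuous_const
    set B : ℝ := (2 * C) * (1 + |x| + c) ^ κ * (1 + c) with hB
    have hBnn : 0 ≤ B := by rw [hB]; positivity
    have hψb : ∀ z, |ψ z| ≤ B * (1 + |z|) ^ κ := by
      intro z
      have e1 : |ψ z| ≤ (2*C) * (1 + |x| + c) ^ κ * (1 + |z|) ^ κ :=
        kbe_scaled_bound h2C hb1 x z hc.le le_rfl
      have e2 : (0:ℝ) ≤ (2*C) * (1 + |x| + c) ^ κ * (1 + |z|) ^ κ := by positivity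
      calc |ψ z| ≤ (2*C) * (1 + |x| + c) ^ κ * (1 + |z|) ^ κ := e1
        _ ≤ ((2*C) * (1 + |x| + c) ^ κ * (1 + |z|) ^ κ) * (1 + c) := by
            nlinarith [e2, hc.le]
        _ = B * (1 + |z|) ^ κ := by rw [hB]; ring
    have hψdb : ∀ z, |ψd z| ≤ B * (1 + |z|) ^ κ := by
      intro z
      have e1 : |deriv (deriv φ) (x + c * z)| ≤ (2*C) * (1 + |x| + c) ^ κ * (1 + |z|) ^ κ :=
        kbe_scaled_bound h2C hb2 x z hc.le le_rfl
      have e2 : |ψd z| = |deriv (deriv φ) (x + c * z)| * c := by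
        rw [hψd, abs_mul, abs_of_nonneg hc.le]
      rw [e2]
      have e3 : (0:ℝ) ≤ (2*C) * (1 + |x| + c) ^ κ * (1 + |z|) ^ κ := by positivity
      calc |deriv (deriv φ) (x + c * z)| * c
          ≤ ((2*C) * (1 + |x| + c) ^ κ * (1 + |z|) ^ κ) * c := by
            exact mul_le_mul_of_nonneg_right e1 hc.le
        _ ≤ ((2*C) * (1 + |x| + c) ^ κ * (1 + |z|) ^ κ) * (1 + c) := by
            nlinarith [e3, hc.le]
        _ = B * (1 + |z|) ^ κ := by rw [hB]; ring
    have hibp := kbe_ibp ψ ψd hψder hψdc B hBnn κ hψb hψdb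
    have hval : (∫ z, deriv φ (x + Real.sqrt (v t) * z) *
        ((-(f t)) / (2 * Real.sqrt (v t)) * z) ∂(gaussianReal 0 1)) = -(1/2) * f t * I := by
      have hrw : (fun z => deriv φ (x + Real.sqrt (v t) * z) *
          ((-(f t)) / (2 * Real.sqrt (v t)) * z)) =
          fun z => ((-(f t)) / (2 * c)) * (z * ψ z) := by
        funext z
        rw [hψ, hcdef]
        ring
      rw [hrw, integral_const_mul, hibp]
      have hrw2 : (fun z => ψd z) = fun z => (fun z => deriv (deriv φ) (x + c * z)) z * c := by
        funext z; rw [hψd]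
      rw [hrw2, integral_mul_const, ← hIsub]
      field_simp
    rw [hval] at hDer
    refine ⟨hDer.differentiableAt, ?_, ?_⟩
    · -- second space derivative
      have huty : (fun y' => u t y') = fun y' => ∫ z, φ (y' + z) ∂(gaussianReal 0 (v t).toNNReal) :=
        funext fun y' => hu t y'
      have hder1 : ∀ y, HasDerivAt (fun y' => ∫ z, φ (y' + z) ∂(gaussianReal 0 (v t).toNNReal))
          (∫ z, deriv φ (y + z) ∂(gaussianReal 0 (v t).toNNReal)) y := fun y =>
        kbe_hasDerivAt_space hVne φ (deriv φ) hdφ hφ'c (2*C) h2C κ hb0 hb1 y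
      have heq2 : (fun y => deriv (fun y' => u t y') y) =
          fun y => ∫ z, deriv φ (y + z) ∂(gaussianReal 0 (v t).toNNReal) := by
        funext y
        rw [huty]
        exact (hder1 y).deriv
      rw [heq2]
      exact kbe_hasDerivAt_space hVne (deriv φ) (deriv (deriv φ)) hdφ' hφ''c (2*C) h2C κ hb1 hb2 x
    · rw [hDer.deriv]
      ring
end
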